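/- arXiv:1508.00158 — 6 statements merged into one kernel-verified Lean document; each statement's English description precedes it below -/
import Mathlib

section
/- A regular graph G is interval colorable if and only if its chromatic index equals its maximum degree, i.e., χ'(G) = Δ(G). -/
open SimpleGraph

/-- A proper edge-coloring: edges sharing a vertex get distinct colors. -/
def EProper {V : Type*} (G : SimpleGraph V) (c : Sym2 V → ℕ) : Prop :=
  ∀ v a b, G.Adj v a → G.Adj v b → a ≠ b → c s(v, a) ≠ c s(v, b)

/-- The spectrum of a vertex: set of colors on incident edges. -/
def specS {V : Type*} (G : SimpleGraph V) (c : Sym2 V → ℕ) (v : V) : Set ℕ :=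
  {k | ∃ u, G.Adj v u ∧ c s(v, u) = k}

/-- An interval t-coloring: proper, uses exactly the colors 1..t, and each
vertex's spectrum is an interval of integers. -/
def IsIntCol {V : Type*} (G : SimpleGraph V) (c : Sym2 V → ℕ) (t : ℕ) : Prop :=
  EProper G c ∧
  (∀ e ∈ G.edgeSet, 1 ≤ c e ∧ c e ≤ t) ∧
  (∀ k, 1 ≤ k → k ≤ t → ∃ e ∈ G.edgeSet, c e = k) ∧
  (∀ v, ∀ a ∈ specS G c v, ∀ b ∈ specS G c v,
     ∀ k, a ≤ k → k ≤ b → k ∈ specS G c v)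

/-- Interval colorability. -/
def IntColorable {V : Type*} (G : SimpleGraph V) : Prop :=
  ∃ t c, IsIntCol G c t

/-- Least t admitting an interval t-coloring. -/
noncomputable def wInt {V : Type*} (G : SimpleGraph V) : ℕ :=
  sInf {t | ∃ c, IsIntCol G c t}

/-- Greatest t admitting an interval t-coloring. -/
noncomputable def WInt {V : Type*} (G : SimpleGraph V) : ℕ :=
  sSup {t | ∃ c, IsIntCol G c t}

/-- The set of values `max S(v,c)` over vertices v. -/
def maxSpecSet {V : Type*} (G : SimpleGraph V) (c : Sym2 V → ℕ) : Set ℕ :=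
  {m | ∃ v, sSup (specS G c v) = m}

/-- The sorted sequence of largest incident colors is continuous: every integer
between its minimum and maximum is attained. -/
def MaxSpecContinuous {V : Type*} (G : SimpleGraph V) (c : Sym2 V → ℕ) : Prop :=
  ∀ k, sInf (maxSpecSet G c) ≤ k → k ≤ sSup (maxSpecSet G c) → k ∈ maxSpecSet G c

/-- The composition (lexicographic product) G[H]. -/
def lexComp {V W : Type*} (G : SimpleGraph V) (H : SimpleGraph W) :
    SimpleGraph (V × W) where
  Adj a b := G.Adj a.1 b.1 ∨ (a.1 = b.1 ∧ H.Adj a.2 b.2)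
  symm := by
    constructor
    intro a b h
    rcases h with h | ⟨h1, h2⟩
    · exact Or.inl h.symm
    · exact Or.inr ⟨h1.symm, h2.symm⟩
  loopless := by
    constructor
    intro a h
    rcases h with h | ⟨_, h2⟩
    · exact G.irrefl h
    · exact H.irrefl h2

/-- The chromatic index: least number of colors in a proper edge-coloring. -/
noncomputable def chromIndex {V : Type*} (G : SimpleGraph V) : ℕ :=
  sInf {k | ∃ c, EProper G c ∧ ∀ e ∈ G.edgeSet, c e < k}

section Helpers

variable {V : Type*} [Fintype V] (G : SimpleGraph V) [DecidableRel G.Adj]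

lemma triv_int_col (h : ∀ a b, ¬ G.Adj a b) : IsIntCol G (fun _ => 0) 0 := by
  refine ⟨?_, ?_, ?_, ?_⟩
  · intro v a b ha _ _ _
    exact h v a ha
  · intro e he
    induction e using Sym2.ind with
    | _ a b => exact absurd (G.mem_edgeSet.mp he) (h a b)
  · intro k hk1 hk0; omega
  · intro v a ha b hb k _ _
    exact absurd ha.choose_spec.1 (h v _)

lemma deg_le_of_proper [Nonempty V] {r : ℕ} (hreg : G.IsRegularOfDegree r)
    {c : Sym2 V → ℕ} {k : ℕ} (hp : EProper G c) (hb : ∀ e ∈ G.edgeSet, c e < k) :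
    r ≤ k := by
  obtain ⟨v⟩ := ‹Nonempty V›
  have hinj : Set.InjOn (fun u => c s(v, u)) (G.neighborFinset v) := by
    intro a ha b hb' hab
    by_contra hne
    exact hp v a b ((G.mem_neighborFinset _ _).mp ha) ((G.mem_neighborFinset _ _).mp hb') hne hab
  have hsub : (G.neighborFinset v).image (fun u => c s(v, u)) ⊆ Finset.range k := by
    intro x hx
    obtain ⟨u, hu, rfl⟩ := Finset.mem_image.mp hx
    exact Finset.mem_range.mpr (hb _ (G.mem_edgeSet.mpr ((G.mem_neighborFinset _ _).mp hu)))
  have h1 : ((G.neighborFinset v).image (fun u => c s(v, u))).card = r := by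
    rw [Finset.card_image_of_injOn hinj, card_neighborFinset_eq_degree, hreg v]
  have := Finset.card_le_card hsub
  rw [h1, Finset.card_range] at this
  exact this

lemma img_eq_range [Nonempty V] {r : ℕ} (hreg : G.IsRegularOfDegree r)
    {c : Sym2 V → ℕ} (hp : EProper G c) (hb : ∀ e ∈ G.edgeSet, c e < r) (v : V) :
    (G.neighborFinset v).image (fun u => c s(v, u)) = Finset.range r := by
  have hinj : Set.InjOn (fun u => c s(v, u)) (G.neighborFinset v) := by
    intro a ha b hb' hab
    by_contra hne
    exact hp v a b ((G.mem_neighborFinset _ _).mp ha) ((G.mem_neighborFinset _ _).mp hb') hne hab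
  have hsub : (G.neighborFinset v).image (fun u => c s(v, u)) ⊆ Finset.range r := by
    intro x hx
    obtain ⟨u, hu, rfl⟩ := Finset.mem_image.mp hx
    exact Finset.mem_range.mpr (hb _ (G.mem_edgeSet.mpr ((G.mem_neighborFinset _ _).mp hu)))
  have h1 : ((G.neighborFinset v).image (fun u => c s(v, u))).card = r := by
    rw [Finset.card_image_of_injOn hinj, card_neighborFinset_eq_degree, hreg v]
  refine Finset.eq_of_subset_of_card_le hsub ?_
  rw [h1, Finset.card_range]

lemma mod_proper {r t : ℕ} (hr : 1 ≤ r) (hreg : G.IsRegularOfDegree r)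
    {c : Sym2 V → ℕ} (hc : IsIntCol G c t) :
    EProper G (fun e => c e % r) := by
  obtain ⟨hp, hb, hused, hint⟩ := hc
  have key : ∀ v z w, z ∈ specS G c v → w ∈ specS G c v → z < w → z % r = w % r → False := by
    intro v z w hz hw hzw heq
    have hsub : Finset.Icc z w ⊆ (G.neighborFinset v).image (fun u => c s(v, u)) := by
      intro k hk
      obtain ⟨hk1, hk2⟩ := Finset.mem_Icc.mp hk
      obtain ⟨u, hu, huc⟩ := hint v z hz w hw k hk1 hk2
      exact Finset.mem_image.mpr ⟨u, (G.mem_neighborFinset _ _).mpr hu, huc⟩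
    have hcard : (Finset.Icc z w).card ≤ r := by
      calc (Finset.Icc z w).card ≤ _ := Finset.card_le_card hsub
        _ ≤ (G.neighborFinset v).card := Finset.card_image_le
        _ = r := by rw [card_neighborFinset_eq_degree, hreg v]
    rw [Nat.card_Icc] at hcard
    have hdvd : r ∣ w - z := (Nat.modEq_iff_dvd' (le_of_lt hzw)).mp heq
    have := Nat.le_of_dvd (by omega) hdvd
    omega
  intro v a b ha hb' hne heq
  have hxne : c s(v, a) ≠ c s(v, b) := hp v a b ha hb' hne
  have hxs : c s(v, a) ∈ specS G c v := ⟨a, ha, rfl⟩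
  have hys : c s(v, b) ∈ specS G c v := ⟨b, hb', rfl⟩
  rcases hxne.lt_or_gt with h | h
  · exact key v _ _ hxs hys h heq
  · exact key v _ _ hys hxs h heq.symm

lemma shift_int_col [Nonempty V] {r : ℕ} (hr : 1 ≤ r) (hreg : G.IsRegularOfDegree r)
    {c : Sym2 V → ℕ} (hp : EProper G c) (hb : ∀ e ∈ G.edgeSet, c e < r) :
    IsIntCol G (fun e => c e + 1) r := by
  have hmem : ∀ v k, 1 ≤ k → k ≤ r → k ∈ specS G (fun e => c e + 1) v := by
    intro v k h1 h2
    have hk : k - 1 ∈ Finset.range r := Finset.mem_range.mpr (by omega)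
    rw [← img_eq_range G hreg hp hb v] at hk
    obtain ⟨u, hu, huc⟩ := Finset.mem_image.mp hk
    refine ⟨u, (G.mem_neighborFinset _ _).mp hu, ?_⟩
    show c s(v, u) + 1 = k
    omega
  have hrange : ∀ v k, k ∈ specS G (fun e => c e + 1) v → 1 ≤ k ∧ k ≤ r := by
    rintro v k ⟨u, hu, rfl⟩
    have := hb s(v, u) (G.mem_edgeSet.mpr hu)
    exact ⟨Nat.le_add_left 1 _, by show c s(v, u) + 1 ≤ r; omega⟩
  refine ⟨?_, ?_, ?_, ?_⟩
  · intro v a b ha hb' hne h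
    have h' : c s(v, a) + 1 = c s(v, b) + 1 := h
    exact hp v a b ha hb' hne (by omega)
  · intro e he
    have := hb e he
    exact ⟨by show 1 ≤ c e + 1; omega, by show c e + 1 ≤ r; omega⟩
  · intro k h1 h2
    obtain ⟨v⟩ := ‹Nonempty V›
    obtain ⟨u, hu, huc⟩ := hmem v k h1 h2
    exact ⟨s(v, u), G.mem_edgeSet.mpr hu, huc⟩
  · intro v a ha b hb' k hak hkb
    obtain ⟨ha1, _⟩ := hrange v a ha
    obtain ⟨_, hb2⟩ := hrange v b hb'
    exact hmem v k (by omega) (by omega)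

lemma chromIndex_zero_of_no_edges (h : ∀ a b, ¬ G.Adj a b) : chromIndex G = 0 := by
  refine Nat.le_zero.mp (Nat.sInf_le ?_)
  refine ⟨fun _ => 0, fun v a b ha _ _ _ => absurd ha (h v a), ?_⟩
  intro e he
  induction e using Sym2.ind with
  | _ a b => exact absurd (G.mem_edgeSet.mp he) (h a b)

end Helpers

/-- A regular graph is interval colorable iff χ'(G) = Δ(G). -/
theorem stmt1 {V : Type*} [Fintype V] (G : SimpleGraph V) [DecidableRel G.Adj]
    (r : ℕ) (hreg : G.IsRegularOfDegree r) :
    IntColorable G ↔ chromIndex G = G.maxDegree := by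
  rcases isEmpty_or_nonempty V with hV | hV
  · have hno : ∀ a b, ¬ G.Adj a b := fun a => (hV.elim a)
    have h1 : IntColorable G := ⟨0, fun _ => 0, triv_int_col G hno⟩
    have h2 : G.maxDegree = 0 := by
      simp only [SimpleGraph.maxDegree, Finset.univ_eq_empty, Finset.image_empty,
        Finset.max_empty]
      rfl
    exact iff_of_true h1 (by rw [chromIndex_zero_of_no_edges G hno, h2])
  · haveI := hV
    have hmax : G.maxDegree = r := by
      refine le_antisymm (G.maxDegree_le_of_forall_degree_le r fun v => (hreg v).le) ?_
      obtain ⟨v⟩ := hV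
      rw [← hreg v]
      exact G.degree_le_maxDegree v
    rcases Nat.eq_zero_or_pos r with hr | hr
    · subst hr
      have hno : ∀ a b, ¬ G.Adj a b := by
        intro a b hab
        have h0 : 0 < G.degree a := G.degree_pos_iff_exists_adj a |>.mpr ⟨b, hab⟩
        rw [hreg a] at h0
        omega
      exact iff_of_true ⟨0, fun _ => 0, triv_int_col G hno⟩
        (by rw [chromIndex_zero_of_no_edges G hno, hmax])
    · constructor
      · rintro ⟨t, c, hc⟩
        have hmemr : r ∈ {k | ∃ c, EProper G c ∧ ∀ e ∈ G.edgeSet, c e < k} :=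
          ⟨fun e => c e % r, mod_proper G hr hreg hc, fun e _ => Nat.mod_lt _ hr⟩
        have hub : chromIndex G ≤ r := Nat.sInf_le hmemr
        have hlb : r ≤ chromIndex G := by
          obtain ⟨c', hc'p, hc'b⟩ := Nat.sInf_mem (⟨r, hmemr⟩ :
            Set.Nonempty {k | ∃ c, EProper G c ∧ ∀ e ∈ G.edgeSet, c e < k})
          exact deg_le_of_proper G hreg hc'p hc'b
        rw [hmax]
        omega
      · intro h
        rw [hmax] at h
        have hsinf : sInf {k | ∃ c, EProper G c ∧ ∀ e ∈ G.edgeSet, c e < k} = r := h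
        have hne : {k | ∃ c, EProper G c ∧ ∀ e ∈ G.edgeSet, c e < k}.Nonempty := by
          by_contra hemp
          rw [Set.not_nonempty_iff_eq_empty] at hemp
          rw [hemp, Nat.sInf_empty] at hsinf
          omega
        obtain ⟨c, hcp, hcb⟩ := Nat.sInf_mem hne
        have hcb' : ∀ e ∈ G.edgeSet, c e < r := by
          intro e he
          have := hcb e he
          rw [hsinf] at this
          exact this
        exact ⟨r, fun e => c e + 1, shift_int_col G hr hreg hcp hcb'⟩
end

section
/- If G is interval colorable, then for any positive integer n the composition G[\overline{K_n}] of G with the empty graph on n vertices is interval colorable; moreover, if G has an interval t-coloring then G[\overline{K_n}] has an interval (t·n)-coloring. -/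
open SimpleGraph

lemma lexBot_adj {V : Type*} {n : ℕ} (G : SimpleGraph V)
    (a b : V × Fin n) :
    (lexComp G (⊥ : SimpleGraph (Fin n))).Adj a b ↔ G.Adj a.1 b.1 := by
  simp [lexComp]

noncomputable def liftCol {V : Type*} (n : ℕ) (c : Sym2 V → ℕ) :
    Sym2 (V × Fin n) → ℕ :=
  Sym2.lift ⟨fun a b => (c s(a.1, b.1) - 1) * n + (a.2 + b.2 : Fin n).val + 1,
    by
      intro a b
      simp only []
      rw [Sym2.eq_swap (a := a.1), add_comm a.2 b.2]⟩

@[simp] lemma liftCol_mk {V : Type*} (n : ℕ) (c : Sym2 V → ℕ)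
    (a b : V × Fin n) :
    liftCol n c s(a, b) = (c s(a.1, b.1) - 1) * n + (a.2 + b.2 : Fin n).val + 1 :=
  rfl

lemma nat_block {n a b p q : ℕ} (hn : 0 < n) (hp : p < n) (hq : q < n)
    (h : a * n + p = b * n + q) : a = b ∧ p = q := by
  have ha : (a * n + p) / n = a := by
    rw [mul_comm, Nat.mul_add_div hn, Nat.div_eq_of_lt hp, add_zero]
  have hb : (b * n + q) / n = b := by
    rw [mul_comm, Nat.mul_add_div hn, Nat.div_eq_of_lt hq, add_zero]
  have hab : a = b := by rw [← ha, ← hb, h]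
  subst hab
  exact ⟨rfl, Nat.add_left_cancel h⟩

lemma spec_lift {V : Type*} (G : SimpleGraph V) (n : ℕ) [NeZero n]
    (c : Sym2 V → ℕ) (u : V) (i : Fin n) (k : ℕ) :
    k ∈ specS (lexComp G (⊥ : SimpleGraph (Fin n))) (liftCol n c) (u, i) ↔
      ∃ m ∈ specS G c u, ∃ r < n, k = (m - 1) * n + r + 1 := by
  constructor
  · rintro ⟨⟨v, j⟩, hadj, hval⟩
    rw [lexBot_adj] at hadj
    exact ⟨c s(u, v), ⟨v, hadj, rfl⟩, (i + j).val, (i + j).isLt, hval.symm⟩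
  · rintro ⟨m, ⟨v, hadj, hcv⟩, r, hr, hk⟩
    have hne : NeZero n := inferInstance
    refine ⟨(v, (⟨r, hr⟩ : Fin n) - i), (lexBot_adj G _ _).mpr hadj, ?_⟩
    rw [liftCol_mk]
    rw [show i + ((⟨r, hr⟩ : Fin n) - i) = (⟨r, hr⟩ : Fin n) by abel]
    rw [hcv, hk]

lemma key {V : Type*} (G : SimpleGraph V) (n : ℕ) (hn : 0 < n)
    (t : ℕ) (c : Sym2 V → ℕ) (hc : IsIntCol G c t) :
    IsIntCol (lexComp G (⊥ : SimpleGraph (Fin n))) (liftCol n c) (t * n) := by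
  haveI : NeZero n := ⟨hn.ne'⟩
  obtain ⟨hprop, hrange, hsurj, hint⟩ := hc
  refine ⟨?_, ?_, ?_, ?_⟩
  · -- proper
    rintro ⟨u, i⟩ ⟨x, j⟩ ⟨y, l⟩ hax hay hne h
    rw [lexBot_adj] at hax hay
    rw [liftCol_mk, liftCol_mk] at h
    dsimp only at h
    have hb := nat_block hn (i + j).isLt (i + l).isLt
      (Nat.add_right_cancel h)
    by_cases hxy : x = y
    · subst hxy
      have hjl : j = l := add_left_cancel (Fin.val_injective hb.2)
      exact hne (by rw [hjl])
    · have h1 := hprop u x y hax hay hxy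
      have hx1 := (hrange s(u, x) (G.mem_edgeSet.mpr hax)).1
      have hy1 := (hrange s(u, y) (G.mem_edgeSet.mpr hay)).1
      omega
  · -- range
    intro e he
    induction e using Sym2.ind with
    | _ a b =>
      rw [SimpleGraph.mem_edgeSet, lexBot_adj] at he
      rw [liftCol_mk]
      obtain ⟨h1, h2⟩ := hrange s(a.1, b.1) (G.mem_edgeSet.mpr he)
      refine ⟨Nat.le_add_left 1 _, ?_⟩
      have hlt : (a.2 + b.2 : Fin n).val < n := (a.2 + b.2).isLt
      calc (c s(a.1, b.1) - 1) * n + (a.2 + b.2 : Fin n).val + 1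
          ≤ (c s(a.1, b.1) - 1) * n + n := by
            have := Nat.succ_le_of_lt hlt
            linarith
        _ = (c s(a.1, b.1) - 1 + 1) * n := (Nat.succ_mul _ _).symm
        _ = c s(a.1, b.1) * n := by rw [Nat.sub_add_cancel h1]
        _ ≤ t * n := Nat.mul_le_mul_right n h2
  · -- surjective
    intro k hk1 hk2
    have hbound : (k - 1) / n + 1 ≤ t := by
      have htn : k - 1 < t * n := by omega
      exact Nat.succ_le_of_lt ((Nat.div_lt_iff_lt_mul hn).mpr htn)
    obtain ⟨e, he, hce⟩ := hsurj ((k - 1) / n + 1) (Nat.le_add_left 1 _) hbound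
    revert he hce
    induction e using Sym2.ind with
    | _ u v =>
      intro he hce
      rw [SimpleGraph.mem_edgeSet] at he
      refine ⟨s((u, 0), (v, ⟨(k - 1) % n, Nat.mod_lt _ hn⟩)), ?_, ?_⟩
      · rw [SimpleGraph.mem_edgeSet, lexBot_adj]; exact he
      · rw [liftCol_mk]
        show (c s(u, v) - 1) * n + ((0 : Fin n) + ⟨(k - 1) % n, Nat.mod_lt _ hn⟩).val + 1 = k
        rw [zero_add, hce, Nat.add_sub_cancel]
        show (k - 1) / n * n + (k - 1) % n + 1 = k
        rw [Nat.div_add_mod']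
        omega
  · -- interval
    rintro ⟨u, i⟩ a ha b hb k hak hkb
    rw [spec_lift] at ha hb ⊢
    obtain ⟨ma, hma, ra, hra, rfl⟩ := ha
    obtain ⟨mb, hmb, rb, hrb, rfl⟩ := hb
    obtain ⟨va, hva, hcva⟩ := hma
    obtain ⟨vb, hvb, hcvb⟩ := hmb
    have hma1 : 1 ≤ ma := hcva ▸ (hrange _ (G.mem_edgeSet.mpr hva)).1
    have hmb1 : 1 ≤ mb := hcvb ▸ (hrange _ (G.mem_edgeSet.mpr hvb)).1
    have h1 : ma ≤ (k - 1) / n + 1 := by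
      have hle : (ma - 1) * n ≤ k - 1 := by omega
      have := (Nat.le_div_iff_mul_le hn).mpr hle
      omega
    have h2 : (k - 1) / n + 1 ≤ mb := by
      have heq : (mb - 1) * n + n = mb * n := by
        calc (mb - 1) * n + n = (mb - 1 + 1) * n := (Nat.succ_mul _ _).symm
          _ = mb * n := by rw [Nat.sub_add_cancel hmb1]
      have hklt : k - 1 < mb * n := by omega
      have := (Nat.div_lt_iff_lt_mul hn).mpr hklt
      omega
    have hmspec := hint u ma ⟨va, hva, hcva⟩ mb ⟨vb, hvb, hcvb⟩
      ((k - 1) / n + 1) h1 h2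
    refine ⟨(k - 1) / n + 1, hmspec, (k - 1) % n, Nat.mod_lt _ hn, ?_⟩
    rw [Nat.add_sub_cancel, Nat.div_add_mod']
    omega

/-- If G is interval colorable, so is G[∅ₙ]; moreover an interval t-coloring of
G yields an interval (t·n)-coloring of G[∅ₙ]. -/
theorem stmt6 {V : Type*} (G : SimpleGraph V) (n : ℕ) (hn : 0 < n)
    (hG : IntColorable G) :
    IntColorable (lexComp G (⊥ : SimpleGraph (Fin n))) ∧
      ∀ t c, IsIntCol G c t →
        ∃ c', IsIntCol (lexComp G (⊥ : SimpleGraph (Fin n))) c' (t * n) := by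
  constructor
  · obtain ⟨t, c, hc⟩ := hG
    exact ⟨t * n, liftCol n c, key G n hn t c hc⟩
  · intro t c hc
    exact ⟨liftCol n c, key G n hn t c hc⟩
end

section
/- Every tree T on at least 2 vertices admits an interval coloring α such that the multiset of largest incident colors {max S(v,α) : v ∈ V(T)}, sorted nondecreasingly, is continuous (contains every integer between its minimum and maximum). -/
open SimpleGraph

namespace Stmt13Aux

open SimpleGraph Walk

variable {V : Type*} [DecidableEq V] (T : SimpleGraph V) (hT : T.IsTree) (r : V)

/-- The unique path from `r` to `v` in the tree. -/
noncomputable def pth (v : V) : T.Walk r v :=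
  (hT.existsUnique_path r v).exists.choose

lemma pth_isPath (v : V) : (pth T hT r v).IsPath :=
  (hT.existsUnique_path r v).exists.choose_spec

lemma pth_unique {v : V} (p : T.Walk r v) (hp : p.IsPath) : p = pth T hT r v :=
  (hT.existsUnique_path r v).unique hp (pth_isPath T hT r v)

/-- depth of a vertex -/
noncomputable def depth (v : V) : ℕ := (pth T hT r v).length

lemma depth_root : depth T hT r r = 0 := by
  have : (Walk.nil : T.Walk r r) = pth T hT r r := pth_unique T hT r _ IsPath.nil
  simp [depth, ← this]

lemma depth_pos {v : V} (hv : v ≠ r) : 1 ≤ depth T hT r v := by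
  by_contra h
  simp only [depth] at h
  have h0 : (pth T hT r v).length = 0 := by omega
  exact hv (Walk.eq_of_length_eq_zero h0).symm

/-- The key dichotomy for adjacent vertices in a tree. -/
lemma core {u v : V} (h : T.Adj u v) :
    (∃ h' : T.Adj u v, pth T hT r v = (pth T hT r u).concat h') ∨
    (∃ h' : T.Adj v u, pth T hT r u = (pth T hT r v).concat h') := by
  by_cases hv : v ∈ (pth T hT r u).support
  · right
    refine ⟨h.symm, ?_⟩
    have h1 : (pth T hT r u).takeUntil v hv = pth T hT r v :=
      pth_unique T hT r _ ((pth_isPath T hT r u).takeUntil hv)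
    have h2 : (pth T hT r u).dropUntil v hv = Walk.cons h.symm Walk.nil := by
      refine (hT.existsUnique_path v u).unique ((pth_isPath T hT r u).dropUntil hv) ?_
      rw [Walk.cons_isPath_iff]
      refine ⟨IsPath.nil, ?_⟩
      simp [h.ne']
    have h3 := Walk.take_spec (pth T hT r u) hv
    rw [h1, h2] at h3
    rw [← h3, Walk.concat_eq_append]
  · left
    refine ⟨h, ?_⟩
    have hQ : ((pth T hT r u).concat h).IsPath := by
      rw [← isPath_reverse_iff, Walk.reverse_concat, Walk.cons_isPath_iff]
      refine ⟨(pth_isPath T hT r u).reverse, ?_⟩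
      rw [Walk.support_reverse, List.mem_reverse]
      exact hv
    exact (pth_unique T hT r _ hQ).symm

lemma exists_parent {v : V} (hv : v ≠ r) :
    ∃ u, ∃ h' : T.Adj u v, pth T hT r v = (pth T hT r u).concat h' := by
  have hnil : ¬ (pth T hT r v).reverse.Nil := Walk.not_nil_of_ne hv
  obtain ⟨u, hadj, q, hq⟩ := Walk.not_nil_iff.mp hnil
  -- hadj : T.Adj v u, q : T.Walk u r, (pth v).reverse = cons hadj q
  have hrev : pth T hT r v = q.reverse.concat hadj.symm := by
    have := congrArg Walk.reverse hq
    rw [Walk.reverse_reverse, Walk.reverse_cons] at this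
    exact this
  have hqpath : q.reverse.IsPath := by
    have : (pth T hT r v).reverse.IsPath := (pth_isPath T hT r v).reverse
    rw [hq, Walk.cons_isPath_iff] at this
    exact this.1.reverse
  refine ⟨u, hadj.symm, ?_⟩
  rw [← pth_unique T hT r q.reverse hqpath]
  exact hrev

/-- The parent of a vertex. -/
noncomputable def par (v : V) : V :=
  if h : v = r then v else (exists_parent T hT r h).choose

lemma par_root : par T hT r r = r := dif_pos rfl

lemma par_adj {v : V} (hv : v ≠ r) : T.Adj (par T hT r v) v := by
  rw [par, dif_neg hv]
  exact (exists_parent T hT r hv).choose_spec.choose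

lemma par_concat {v : V} (hv : v ≠ r) (h' : T.Adj (par T hT r v) v) :
    pth T hT r v = (pth T hT r (par T hT r v)).concat h' := by
  revert h'
  rw [par, dif_neg hv]
  intro h'
  obtain ⟨h2, heq⟩ := (exists_parent T hT r hv).choose_spec
  exact heq

lemma par_spec {v : V} (hv : v ≠ r) :
    ∃ h' : T.Adj (par T hT r v) v,
      pth T hT r v = (pth T hT r (par T hT r v)).concat h' :=
  ⟨par_adj T hT r hv, par_concat T hT r hv _⟩

lemma depth_par {v : V} (hv : v ≠ r) :
    depth T hT r (par T hT r v) + 1 = depth T hT r v := by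
  obtain ⟨h', heq⟩ := par_spec T hT r hv
  have := congrArg Walk.length heq
  rw [Walk.length_concat] at this
  simp [depth, this]

lemma par_unique {u v : V} (h : T.Adj u v)
    (hd : depth T hT r u < depth T hT r v) : u = par T hT r v := by
  have hv : v ≠ r := by
    intro hvr
    have h0 : depth T hT r v = 0 := hvr ▸ depth_root T hT r
    omega
  rcases core T hT r h with ⟨h', heq⟩ | ⟨h', heq⟩
  · obtain ⟨h'', heq'⟩ := par_spec T hT r hv
    rw [heq] at heq'
    obtain ⟨hveq, -⟩ := Walk.concat_inj heq'
    exact hveq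
  · exfalso
    have := congrArg Walk.length heq
    rw [Walk.length_concat] at this
    simp only [depth] at hd
    omega

lemma adj_cases {u v : V} (h : T.Adj u v) :
    u = par T hT r v ∨ v = par T hT r u := by
  rcases core T hT r h with ⟨h', heq⟩ | ⟨h', heq⟩
  · left
    apply par_unique T hT r h
    have := congrArg Walk.length heq
    rw [Walk.length_concat] at this
    simp only [depth]
    omega
  · right
    apply par_unique T hT r h.symm
    have := congrArg Walk.length heq
    rw [Walk.length_concat] at this
    simp only [depth]
    omega


/-! ### index within a finset -/

noncomputable def finIdx {V : Type*} [DecidableEq V] (s : Finset V) (v : V) : ℕ :=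
  if h : v ∈ s then
    1 + ((Fintype.equivFinOfCardEq (Fintype.card_coe s)) ⟨v, h⟩ : Fin s.card).val
  else 0

lemma finIdx_pos {V : Type*} [DecidableEq V] {s : Finset V} {v : V} (h : v ∈ s) : 1 ≤ finIdx s v := by
  rw [finIdx, dif_pos h]; omega

lemma finIdx_le {V : Type*} [DecidableEq V] {s : Finset V} {v : V} (h : v ∈ s) : finIdx s v ≤ s.card := by
  rw [finIdx, dif_pos h]
  have := ((Fintype.equivFinOfCardEq (Fintype.card_coe s)) ⟨v, h⟩).isLt
  omega

lemma finIdx_inj {V : Type*} [DecidableEq V] {s : Finset V} {a b : V} (ha : a ∈ s) (hb : b ∈ s)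
    (h : finIdx s a = finIdx s b) : a = b := by
  simp only [finIdx] at h
  rw [dif_pos ha, dif_pos hb] at h
  have he : (Fintype.equivFinOfCardEq (Fintype.card_coe s)) ⟨a, ha⟩
      = (Fintype.equivFinOfCardEq (Fintype.card_coe s)) ⟨b, hb⟩ := Fin.ext (by omega)
  simpa using congrArg Subtype.val ((Fintype.equivFinOfCardEq (Fintype.card_coe s)).injective he)

lemma finIdx_surj {V : Type*} [DecidableEq V] {s : Finset V} {i : ℕ} (hi1 : 1 ≤ i) (hi2 : i ≤ s.card) :
    ∃ a ∈ s, finIdx s a = i := by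
  set e := Fintype.equivFinOfCardEq (Fintype.card_coe s) with he
  set x := e.symm ⟨i - 1, by omega⟩ with hx
  refine ⟨(x : V), x.2, ?_⟩
  rw [finIdx, dif_pos x.2]
  have h1 : (⟨(x : V), x.2⟩ : {y // y ∈ s}) = x := rfl
  rw [h1, hx, Equiv.apply_symm_apply]
  simp
  omega

section WithFintype

variable [Fintype V]

noncomputable def childSet (u : V) : Finset V :=
  Finset.univ.filter (fun v => par T hT r v = u ∧ v ≠ r)

lemma mem_childSet {x u : V} :
    x ∈ childSet T hT r u ↔ par T hT r x = u ∧ x ≠ r := by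
  simp [childSet]

noncomputable def idx (v : V) : ℕ := finIdx (childSet T hT r (par T hT r v)) v

noncomputable def wgt : V → ℕ := fun v =>
  if h : v = r then 0 else wgt (par T hT r v) + idx T hT r v
termination_by v => depth T hT r v
decreasing_by
  have := depth_par T hT r h
  omega

lemma wgt_root : wgt T hT r r = 0 := by rw [wgt]; simp

lemma wgt_ne {v : V} (hv : v ≠ r) :
    wgt T hT r v = wgt T hT r (par T hT r v) + idx T hT r v := by
  conv_lhs => rw [wgt]
  simp [hv]

lemma self_mem_childSet {v : V} (hv : v ≠ r) :
    v ∈ childSet T hT r (par T hT r v) :=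
  (mem_childSet T hT r).2 ⟨rfl, hv⟩

lemma wgt_pos {v : V} (hv : v ≠ r) : 1 ≤ wgt T hT r v := by
  rw [wgt_ne T hT r hv]
  have := finIdx_pos (self_mem_childSet T hT r hv)
  rw [idx]
  omega

noncomputable def Wm : ℕ := Finset.univ.sup (wgt T hT r)

lemma wgt_le (v : V) : wgt T hT r v ≤ Wm T hT r :=
  Finset.le_sup (Finset.mem_univ v)

lemma child_facts {x u : V} (hx : x ∈ childSet T hT r u) :
    T.Adj u x ∧ wgt T hT r x = wgt T hT r u + finIdx (childSet T hT r u) x ∧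
      1 ≤ finIdx (childSet T hT r u) x ∧
      finIdx (childSet T hT r u) x ≤ (childSet T hT r u).card := by
  obtain ⟨hpar, hxr⟩ := (mem_childSet T hT r).1 hx
  have hadj := par_adj T hT r hxr
  rw [hpar] at hadj
  have hw := wgt_ne T hT r hxr
  rw [idx, hpar] at hw
  have hmem : x ∈ childSet T hT r u := hx
  exact ⟨hadj, hw, finIdx_pos hmem, finIdx_le hmem⟩

/-- The coloring. -/
noncomputable def col : Sym2 V → ℕ :=
  Sym2.lift ⟨fun a b =>
    if depth T hT r a < depth T hT r b then Wm T hT r + 1 - wgt T hT r b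
    else if depth T hT r b < depth T hT r a then Wm T hT r + 1 - wgt T hT r a
    else 0, by intro a b; dsimp only; split_ifs <;> omega⟩

lemma col_parent {v : V} (hv : v ≠ r) :
    col T hT r s(par T hT r v, v) = Wm T hT r + 1 - wgt T hT r v := by
  have hd := depth_par T hT r hv
  rw [col, Sym2.lift_mk]
  dsimp only
  rw [if_pos (by omega)]

lemma col_child {x u : V} (hx : x ∈ childSet T hT r u) :
    col T hT r s(u, x) = Wm T hT r + 1 - wgt T hT r x := by
  obtain ⟨hpar, hxr⟩ := (mem_childSet T hT r).1 hx
  have := col_parent T hT r hxr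
  rwa [hpar] at this

lemma mem_spec {v : V} {k : ℕ} :
    k ∈ specS T (col T hT r) v ↔
      (v ≠ r ∧ k = Wm T hT r + 1 - wgt T hT r v) ∨
      (∃ x ∈ childSet T hT r v, k = Wm T hT r + 1 - wgt T hT r x) := by
  constructor
  · rintro ⟨u, hadj, hcol⟩
    rcases adj_cases T hT r hadj with hp | hp
    · -- v = par u, so u is a child of v
      right
      have hur : u ≠ r := by
        intro h
        rw [h, par_root] at hp
        rw [hp, h] at hadj
        exact T.irrefl hadj
      refine ⟨u, (mem_childSet T hT r).2 ⟨hp.symm, hur⟩, ?_⟩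
      rw [← hcol, ← col_child T hT r ((mem_childSet T hT r).2 ⟨hp.symm, hur⟩)]
    · -- u = par v
      left
      have hvr : v ≠ r := by
        intro h
        rw [h, par_root] at hp
        rw [hp, h] at hadj
        exact T.irrefl hadj
      refine ⟨hvr, ?_⟩
      rw [← hcol, hp, Sym2.eq_swap, col_parent T hT r hvr]
  · rintro (⟨hv, rfl⟩ | ⟨x, hx, rfl⟩)
    · exact ⟨par T hT r v, (par_adj T hT r hv).symm,
        by rw [Sym2.eq_swap, col_parent T hT r hv]⟩
    · exact ⟨x, (child_facts T hT r hx).1, col_child T hT r hx⟩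

/-- classified color of an incident edge -/
lemma adj_color {v u : V} (hadj : T.Adj v u) :
    (u = par T hT r v ∧ v ≠ r ∧
      col T hT r s(v, u) = Wm T hT r + 1 - wgt T hT r v) ∨
    (u ∈ childSet T hT r v ∧
      col T hT r s(v, u) = Wm T hT r + 1 - wgt T hT r u ∧
      wgt T hT r u = wgt T hT r v + finIdx (childSet T hT r v) u) := by
  rcases adj_cases T hT r hadj with hp | hp
  · right
    have hur : u ≠ r := by
      intro h
      rw [h, par_root] at hp
      rw [hp, h] at hadj
      exact T.irrefl hadj
    have hmem : u ∈ childSet T hT r v := (mem_childSet T hT r).2 ⟨hp.symm, hur⟩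
    exact ⟨hmem, col_child T hT r hmem, (child_facts T hT r hmem).2.1⟩
  · left
    have hvr : v ≠ r := by
      intro h
      rw [h, par_root] at hp
      rw [hp, h] at hadj
      exact T.irrefl hadj
    refine ⟨hp, hvr, ?_⟩
    rw [hp, Sym2.eq_swap, col_parent T hT r hvr]

lemma proper : EProper T (col T hT r) := by
  intro v a b ha hb hab
  rcases adj_color T hT r ha with ⟨hpa, hvr, hca⟩ | ⟨hma, hca, hwa⟩ <;>
    rcases adj_color T hT r hb with ⟨hpb, hvr', hcb⟩ | ⟨hmb, hcb, hwb⟩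
  · exact absurd (hpa.trans hpb.symm) hab
  · rw [hca, hcb]
    have h1 := wgt_le T hT r b
    have h2 := finIdx_pos ((mem_childSet T hT r).1 hmb |>.2 |> fun h => hmb)
    have h2 := finIdx_pos hmb
    have h3 := wgt_pos T hT r hvr
    omega
  · rw [hca, hcb]
    have h1 := wgt_le T hT r a
    have h2 := finIdx_pos hma
    have h3 := wgt_pos T hT r hvr'
    omega
  · rw [hca, hcb]
    have h1 := wgt_le T hT r a
    have h2 := wgt_le T hT r b
    have hne : finIdx (childSet T hT r v) a ≠ finIdx (childSet T hT r v) b :=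
      fun h => hab (finIdx_inj hma hmb h)
    have h3 := finIdx_pos hma
    have h4 := finIdx_pos hmb
    omega

lemma wgt_surj (h2 : 2 ≤ Fintype.card V) {k : ℕ} (hk1 : 1 ≤ k) (hk2 : k ≤ Wm T hT r) :
    ∃ v, v ≠ r ∧ wgt T hT r v = k := by
  have hdown : ∀ m, 2 ≤ m → (∃ v, v ≠ r ∧ wgt T hT r v = m) →
      ∃ v, v ≠ r ∧ wgt T hT r v = m - 1 := by
    rintro m hm ⟨v, hvr, hw⟩
    have hmem := self_mem_childSet T hT r hvr
    have hwv := wgt_ne T hT r hvr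
    rw [idx] at hwv
    by_cases hi : finIdx (childSet T hT r (par T hT r v)) v = 1
    · refine ⟨par T hT r v, ?_, by omega⟩
      intro hpr
      rw [hpr] at hwv hi
      rw [wgt_root] at hwv
      omega
    · have hip := finIdx_pos hmem
      have hile := finIdx_le hmem
      obtain ⟨x, hx, hxi⟩ := finIdx_surj (s := childSet T hT r (par T hT r v))
        (i := finIdx (childSet T hT r (par T hT r v)) v - 1) (by omega) (by omega)
      obtain ⟨hxpar, hxr⟩ := (mem_childSet T hT r).1 hx
      have hwx := wgt_ne T hT r hxr
      rw [idx, hxpar] at hwx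
      exact ⟨x, hxr, by omega⟩
  -- top is attained
  have hWpos : 1 ≤ Wm T hT r := le_trans hk1 hk2
  haveI : Nonempty V := Fintype.card_pos_iff.mp (by omega)
  have htop : ∃ v, v ≠ r ∧ wgt T hT r v = Wm T hT r := by
    obtain ⟨v, -, hv⟩ := Finset.exists_mem_eq_sup Finset.univ
      (Finset.univ_nonempty (α := V)) (wgt T hT r)
    have hv2 : Wm T hT r = wgt T hT r v := hv
    refine ⟨v, ?_, hv2.symm⟩
    intro hvr
    rw [hvr, wgt_root] at hv2
    omega
  have main : ∀ d k, 1 ≤ k → k + d = Wm T hT r → ∃ v, v ≠ r ∧ wgt T hT r v = k := by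
    intro d
    induction d with
    | zero =>
      intro k hk1 hk2
      have hkW : k = Wm T hT r := by omega
      rw [hkW]; exact htop
    | succ n ih =>
      intro k hk1 hk2
      obtain ⟨v, hvr, hw⟩ := ih (k + 1) (by omega) (by omega)
      obtain ⟨v', hv'⟩ := hdown (k + 1) (by omega) ⟨v, hvr, hw⟩
      exact ⟨v', hv'.1, by omega⟩
  exact main (Wm T hT r - k) k hk1 (by omega)

lemma spec_bddAbove (v : V) : BddAbove (specS T (col T hT r) v) := by
  refine ⟨Wm T hT r + 1, ?_⟩
  rintro k hk
  rcases (mem_spec T hT r).1 hk with ⟨-, rfl⟩ | ⟨x, -, rfl⟩ <;> omega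

lemma sSup_spec_ne {v : V} (hv : v ≠ r) :
    sSup (specS T (col T hT r) v) = Wm T hT r + 1 - wgt T hT r v := by
  have hmem : Wm T hT r + 1 - wgt T hT r v ∈ specS T (col T hT r) v :=
    (mem_spec T hT r).2 (Or.inl ⟨hv, rfl⟩)
  apply le_antisymm
  · apply csSup_le ⟨_, hmem⟩
    intro k hk
    rcases (mem_spec T hT r).1 hk with ⟨-, rfl⟩ | ⟨x, hx, rfl⟩
    · exact le_refl _
    · have := (child_facts T hT r hx).2.1
      have := (child_facts T hT r hx).2.2.1
      omega
  · exact le_csSup (spec_bddAbove T hT r v) hmem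

lemma childSet_root_nonempty (h2 : 2 ≤ Fintype.card V) :
    (childSet T hT r r).Nonempty := by
  obtain ⟨u, hu⟩ := Fintype.exists_ne_of_one_lt_card (by omega) r
  obtain ⟨p⟩ := (hT.isConnected.preconnected r u : T.Reachable r u)
  have hnil : ¬ p.Nil := Walk.not_nil_of_ne hu.symm
  have hadj : T.Adj r (p.getVert 1) := Walk.adj_snd hnil
  rcases adj_cases T hT r hadj with hp | hp
  · exact ⟨p.getVert 1, (mem_childSet T hT r).2 ⟨hp.symm, hadj.ne'⟩⟩
  · rw [par_root] at hp
    rw [hp] at hadj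
    exact absurd hadj T.irrefl

lemma sSup_spec_root (h2 : 2 ≤ Fintype.card V) :
    sSup (specS T (col T hT r) r) = Wm T hT r := by
  obtain ⟨x0, hx0, hxi⟩ := finIdx_surj (s := childSet T hT r r) (i := 1) le_rfl
    (Finset.card_pos.2 (childSet_root_nonempty T hT r h2))
  have hw0 : wgt T hT r x0 = 1 := by
    have := (child_facts T hT r hx0).2.1
    rw [wgt_root, hxi] at this
    omega
  have hmem : Wm T hT r ∈ specS T (col T hT r) r := by
    refine (mem_spec T hT r).2 (Or.inr ⟨x0, hx0, ?_⟩)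
    omega
  apply le_antisymm
  · apply csSup_le ⟨_, hmem⟩
    intro k hk
    rcases (mem_spec T hT r).1 hk with ⟨hr', -⟩ | ⟨x, hx, rfl⟩
    · exact absurd rfl hr'
    · have h1 := wgt_pos T hT r ((mem_childSet T hT r).1 hx).2
      omega
  · exact le_csSup (spec_bddAbove T hT r r) hmem

lemma Wm_pos (h2 : 2 ≤ Fintype.card V) : 1 ≤ Wm T hT r := by
  obtain ⟨u, hu⟩ := Fintype.exists_ne_of_one_lt_card (by omega) r
  exact le_trans (wgt_pos T hT r hu) (wgt_le T hT r u)

lemma maxSpec_eq (h2 : 2 ≤ Fintype.card V) :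
    maxSpecSet T (col T hT r) = Set.Icc 1 (Wm T hT r) := by
  ext k
  constructor
  · rintro ⟨v, rfl⟩
    by_cases hv : v = r
    · rw [hv]
      rw [sSup_spec_root T hT r h2]
      exact Set.mem_Icc.2 ⟨Wm_pos T hT r h2, le_rfl⟩
    · rw [sSup_spec_ne T hT r hv]
      have h1 := wgt_pos T hT r hv
      have h3 := wgt_le T hT r v
      exact Set.mem_Icc.2 ⟨by omega, by omega⟩
  · intro hk
    obtain ⟨hk1, hk2⟩ := Set.mem_Icc.1 hk
    obtain ⟨v, hvr, hw⟩ := wgt_surj T hT r h2 (k := Wm T hT r + 1 - k)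
      (by omega) (by omega)
    refine ⟨v, ?_⟩
    rw [sSup_spec_ne T hT r hvr, hw]
    omega

end WithFintype

end Stmt13Aux

open Stmt13Aux in
/-- Every tree on at least 2 vertices admits an interval coloring whose sorted
sequence of largest incident colors is continuous. -/
theorem stmt13 {V : Type*} [Fintype V] (T : SimpleGraph V) (hT : T.IsTree)
    (h2 : 2 ≤ Fintype.card V) :
    ∃ t α, IsIntCol T α t ∧ MaxSpecContinuous T α := by
  letI : DecidableEq V := Classical.decEq V
  have hne : Nonempty V := Fintype.card_pos_iff.mp (by omega)
  obtain ⟨r⟩ := hne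
  refine ⟨Wm T hT r, col T hT r, ⟨proper T hT r, ?_, ?_, ?_⟩, ?_⟩
  · -- colors in [1, t]
    intro e he
    revert he
    refine Sym2.ind ?_ e
    intro a b he
    rw [SimpleGraph.mem_edgeSet] at he
    rcases adj_color T hT r he with ⟨-, hvr, hc⟩ | ⟨hm, hc, -⟩
    · have h1 := wgt_pos T hT r hvr
      have h3 := wgt_le T hT r a
      rw [hc]
      omega
    · have hbr := ((mem_childSet T hT r).1 hm).2
      have h1 := wgt_pos T hT r hbr
      have h3 := wgt_le T hT r b
      rw [hc]
      omega
  · -- all colors used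
    intro k hk1 hkt
    obtain ⟨v, hvr, hw⟩ := wgt_surj T hT r h2 (k := Wm T hT r + 1 - k)
      (by omega) (by omega)
    refine ⟨s(par T hT r v, v), (SimpleGraph.mem_edgeSet T).2 (par_adj T hT r hvr), ?_⟩
    rw [col_parent T hT r hvr, hw]
    omega
  · -- interval spectra
    intro v a ha b hb k hak hkb
    by_cases hv : v = r
    · rw [hv] at ha hb ⊢
      rcases (mem_spec T hT r).1 ha with ⟨hc, -⟩ | ⟨xa, hxa, rfl⟩
      · exact absurd rfl hc
      rcases (mem_spec T hT r).1 hb with ⟨hc, -⟩ | ⟨xb, hxb, rfl⟩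
      · exact absurd rfl hc
      have fa := (child_facts T hT r hxa).2
      have fb := (child_facts T hT r hxb).2
      rw [wgt_root] at fa fb
      obtain ⟨x, hx, hxi⟩ := finIdx_surj (s := childSet T hT r r)
        (i := Wm T hT r + 1 - k) (by omega) (by omega)
      have fx := (child_facts T hT r hx).2
      rw [wgt_root] at fx
      exact (mem_spec T hT r).2 (Or.inr ⟨x, hx, by omega⟩)
    · have hWle := wgt_le T hT r v
      have hWpos := wgt_pos T hT r hv
      by_cases hk : k = Wm T hT r + 1 - wgt T hT r v
      · exact (mem_spec T hT r).2 (Or.inl ⟨hv, hk⟩)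
      · have hub : ∀ m ∈ specS T (col T hT r) v,
            m ≤ Wm T hT r + 1 - wgt T hT r v ∧
            Wm T hT r + 1 - wgt T hT r v - (childSet T hT r v).card ≤ m := by
          intro m hm
          rcases (mem_spec T hT r).1 hm with ⟨-, rfl⟩ | ⟨x, hx, rfl⟩
          · constructor <;> omega
          · have fx := (child_facts T hT r hx).2
            have hxle := wgt_le T hT r x
            constructor <;> omega
        obtain ⟨ha1, ha2⟩ := hub a ha
        obtain ⟨hb1, hb2⟩ := hub b hb
        obtain ⟨x, hx, hxi⟩ := finIdx_surj (s := childSet T hT r v)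
          (i := Wm T hT r + 1 - wgt T hT r v - k) (by omega) (by omega)
        have fx := (child_facts T hT r hx).2
        have hxle := wgt_le T hT r x
        exact (mem_spec T hT r).2 (Or.inr ⟨x, hx, by omega⟩)
  · -- continuity of max spectra
    intro k hk1 hk2
    rw [maxSpec_eq T hT r h2] at hk1 hk2 ⊢
    rw [csInf_Icc (Wm_pos T hT r h2)] at hk1
    rw [csSup_Icc (Wm_pos T hT r h2)] at hk2
    exact Set.mem_Icc.2 ⟨hk1, hk2⟩
end

section
/- If G is interval colorable and T is a tree, then the composition G[T] is interval colorable. -/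
open SimpleGraph

namespace Stmt14Aux
set_option linter.unusedSectionVars false
set_option linter.unusedVariables false
open scoped Classical


/-- rank of `y` in a finset of naturals: number of smaller elements. -/
def rkN (X : Finset ℕ) (y : ℕ) : ℕ := (X.filter (· < y)).card

lemma rkN_lt {X : Finset ℕ} {y : ℕ} (hy : y ∈ X) : rkN X y < X.card := by
  apply Finset.card_lt_card
  constructor
  · exact Finset.filter_subset _ _
  · intro hsub
    have := hsub hy
    simp only [Finset.mem_filter] at this
    omega

lemma rkN_strict {X : Finset ℕ} {y z : ℕ} (hy : y ∈ X) (hyz : y < z) :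
    rkN X y < rkN X z := by
  have h1 : insert y (X.filter (· < y)) ⊆ X.filter (· < z) := by
    intro w hw
    rcases Finset.mem_insert.mp hw with rfl | hw
    · exact Finset.mem_filter.mpr ⟨hy, hyz⟩
    · rcases Finset.mem_filter.mp hw with ⟨h1, h2⟩
      exact Finset.mem_filter.mpr ⟨h1, by omega⟩
  have h2 : y ∉ X.filter (· < y) := by
    simp only [Finset.mem_filter]; omega
  have := Finset.card_le_card h1
  rw [Finset.card_insert_of_notMem h2] at this
  unfold rkN; omega

lemma rkN_inj {X : Finset ℕ} {y z : ℕ} (hy : y ∈ X) (hz : z ∈ X)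
    (h : rkN X y = rkN X z) : y = z := by
  rcases lt_trichotomy y z with hlt | heq | hgt
  · have := rkN_strict hy hlt; omega
  · exact heq
  · have := rkN_strict hz hgt; omega

lemma rkN_surj (X : Finset ℕ) : ∀ k < X.card, ∃ y ∈ X, rkN X y = k := by
  induction X using Finset.strongInduction with
  | _ X ih =>
    intro k hk
    have hne : X.Nonempty := Finset.card_pos.mp (by omega)
    set M := X.max' hne with hMdef
    have hM : M ∈ X := X.max'_mem hne
    have hfmax : X.filter (· < M) = X.erase M := by
      ext z
      simp only [Finset.mem_filter, Finset.mem_erase]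
      constructor
      · rintro ⟨h1, h2⟩; exact ⟨by omega, h1⟩
      · rintro ⟨h1, h2⟩
        have := X.le_max' z h2
        exact ⟨h2, by omega⟩
    have hrkM : rkN X M = X.card - 1 := by
      unfold rkN
      rw [hfmax, Finset.card_erase_of_mem hM]
    by_cases hk1 : k = X.card - 1
    · exact ⟨M, hM, by omega⟩
    · have hss : X.erase M ⊂ X := Finset.erase_ssubset hM
      have hcard : (X.erase M).card = X.card - 1 := Finset.card_erase_of_mem hM
      obtain ⟨y, hy, hrk⟩ := ih (X.erase M) hss k (by omega)
      refine ⟨y, Finset.mem_of_mem_erase hy, ?_⟩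
      have hyM : y < M := by
        have h1 := X.le_max' y (Finset.mem_of_mem_erase hy)
        have h2 : y ≠ M := Finset.ne_of_mem_erase hy
        omega
      have hfeq : X.filter (· < y) = (X.erase M).filter (· < y) := by
        ext z
        simp only [Finset.mem_filter, Finset.mem_erase]
        constructor
        · rintro ⟨h1, h2⟩; exact ⟨⟨by omega, h1⟩, h2⟩
        · rintro ⟨⟨_, h1⟩, h2⟩; exact ⟨h1, h2⟩
      unfold rkN at hrk ⊢
      rw [hfeq]; exact hrk

variable {α : Type*} [DecidableEq α]

/-- rank w.r.t. an injective ℕ-valued key. -/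
def rkF (X : Finset α) (key : α → ℕ) (v : α) : ℕ :=
  (X.filter (fun w => key w < key v)).card

lemma rkF_eq_rkN (X : Finset α) (key : α → ℕ) (hinj : Set.InjOn key X) (v : α) :
    rkF X key v = rkN (X.image key) (key v) := by
  unfold rkF rkN
  rw [← Finset.card_image_of_injOn (hinj.mono (Finset.filter_subset _ _))]
  congr 1
  ext y
  simp only [Finset.mem_image, Finset.mem_filter]
  constructor
  · rintro ⟨w, ⟨hw1, hw2⟩, rfl⟩; exact ⟨⟨w, hw1, rfl⟩, hw2⟩
  · rintro ⟨⟨w, hw1, rfl⟩, hw2⟩; exact ⟨w, ⟨hw1, hw2⟩, rfl⟩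

lemma rkF_lt {X : Finset α} {key : α → ℕ} (hinj : Set.InjOn key X) {v : α}
    (hv : v ∈ X) : rkF X key v < X.card := by
  rw [rkF_eq_rkN X key hinj, ← Finset.card_image_of_injOn hinj]
  exact rkN_lt (Finset.mem_image_of_mem key hv)

lemma rkF_inj {X : Finset α} {key : α → ℕ} (hinj : Set.InjOn key X) {v w : α}
    (hv : v ∈ X) (hw : w ∈ X) (h : rkF X key v = rkF X key w) : v = w := by
  rw [rkF_eq_rkN X key hinj, rkF_eq_rkN X key hinj] at h
  exact hinj hv hw (rkN_inj (Finset.mem_image_of_mem key hv)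
    (Finset.mem_image_of_mem key hw) h)

lemma rkF_surj {X : Finset α} {key : α → ℕ} (hinj : Set.InjOn key X) :
    ∀ k < X.card, ∃ v ∈ X, rkF X key v = k := by
  intro k hk
  rw [← Finset.card_image_of_injOn hinj] at hk
  obtain ⟨y, hy, hrk⟩ := rkN_surj (X.image key) k hk
  obtain ⟨v, hv, rfl⟩ := Finset.mem_image.mp hy
  exact ⟨v, hv, by rw [rkF_eq_rkN X key hinj]; exact hrk⟩

lemma rkF_strict {X : Finset α} {key : α → ℕ} {v w : α}
    (hv : v ∈ X) (hkey : key v < key w) : rkF X key v < rkF X key w := by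
  unfold rkF
  have h1 : insert v (X.filter (fun z => key z < key v)) ⊆
      X.filter (fun z => key z < key w) := by
    intro z hz
    rcases Finset.mem_insert.mp hz with rfl | hz
    · exact Finset.mem_filter.mpr ⟨hv, hkey⟩
    · rcases Finset.mem_filter.mp hz with ⟨h1, h2⟩
      exact Finset.mem_filter.mpr ⟨h1, by omega⟩
  have h2 : v ∉ X.filter (fun z => key z < key v) := by
    simp only [Finset.mem_filter]; omega
  have := Finset.card_le_card h1
  rw [Finset.card_insert_of_notMem h2] at this
  omega

/-- Intermediate value for step-≤1 ℕ-sequences, giving first hit. -/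
lemma climb (f : ℕ → ℕ) (a b : ℕ) (hab : a ≤ b)
    (hstep : ∀ p, a ≤ p → p < b → f (p + 1) ≤ f p + 1)
    (j : ℕ) (hja : f a < j) (hjb : j ≤ f b) :
    ∃ r, a < r ∧ r ≤ b ∧ f r = j ∧ f (r - 1) < j := by
  induction b, hab using Nat.le_induction with
  | base => omega
  | succ b hab ih =>
    by_cases hj : j ≤ f b
    · obtain ⟨r, h1, h2, h3, h4⟩ := ih (fun p hp hpb => hstep p hp (by omega)) hj
      exact ⟨r, h1, by omega, h3, h4⟩
    · have hs := hstep b hab (by omega)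
      refine ⟨b + 1, by omega, le_refl _, by omega, ?_⟩
      simpa using by omega


section TreePath
variable {W : Type*} (T : SimpleGraph W) (hT : T.IsTree)

noncomputable def root : W := hT.isConnected.nonempty.some

noncomputable def pathTo (v : W) : T.Walk v (root T hT) :=
  (hT.existsUnique_path v (root T hT)).choose

lemma pathTo_isPath (v : W) : (pathTo T hT v).IsPath :=
  (hT.existsUnique_path v (root T hT)).choose_spec.1

lemma path_eq {v : W} (q : T.Walk v (root T hT)) (hq : q.IsPath) :
    q = pathTo T hT v := by
  have h := hT.IsAcyclic.path_unique ⟨q, hq⟩ ⟨pathTo T hT v, pathTo_isPath T hT v⟩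
  exact congrArg Subtype.val h

noncomputable def par (v : W) : W := (pathTo T hT v).getVert 1
noncomputable def depth (v : W) : ℕ := (pathTo T hT v).length

lemma pathTo_root : pathTo T hT (root T hT) = SimpleGraph.Walk.nil :=
  (path_eq T hT SimpleGraph.Walk.nil (SimpleGraph.Walk.IsPath.nil)).symm

lemma pathTo_decomp {v : W} (hv : v ≠ root T hT) :
    ∃ (h : T.Adj v (par T hT v)),
      pathTo T hT v = SimpleGraph.Walk.cons h (pathTo T hT (par T hT v)) := by
  have hnil : ¬(pathTo T hT v).Nil := SimpleGraph.Walk.not_nil_of_ne hv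
  obtain ⟨u, hadj, q, hq⟩ := SimpleGraph.Walk.not_nil_iff.mp hnil
  have hpu : par T hT v = u := by
    unfold par; rw [hq]
    simp [SimpleGraph.Walk.getVert_cons_succ]
  have hqpath : q.IsPath := by
    have := pathTo_isPath T hT v
    rw [hq, SimpleGraph.Walk.cons_isPath_iff] at this
    exact this.1
  subst hpu
  refine ⟨hadj, ?_⟩
  rw [hq]
  congr 1
  exact path_eq T hT q hqpath

lemma adj_par {v : W} (hv : v ≠ root T hT) : T.Adj v (par T hT v) :=
  (pathTo_decomp T hT hv).choose

lemma depth_par {v : W} (hv : v ≠ root T hT) :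
    depth T hT (par T hT v) + 1 = depth T hT v := by
  obtain ⟨h, hdec⟩ := pathTo_decomp T hT hv
  unfold depth
  rw [hdec, SimpleGraph.Walk.length_cons]

lemma depth_par_lt {v : W} (hv : v ≠ root T hT) :
    depth T hT (par T hT v) < depth T hT v := by
  have := depth_par T hT hv; omega

lemma par_no_swap {v w : W} (hv : v ≠ root T hT) (hw : w ≠ root T hT)
    (h1 : par T hT v = w) (h2 : par T hT w = v) : False := by
  have d1 := depth_par T hT hv
  have d2 := depth_par T hT hw
  rw [h1] at d1; rw [h2] at d2; omega

lemma adj_classify {u v : W} (h : T.Adj u v) :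
    (u ≠ root T hT ∧ par T hT u = v) ∨ (v ≠ root T hT ∧ par T hT v = u) := by
  by_cases hvs : v ∈ (pathTo T hT u).support
  · left
    have hur : u ≠ root T hT := by
      rintro rfl
      rw [pathTo_root] at hvs
      simp only [SimpleGraph.Walk.support_nil, List.mem_singleton] at hvs
      exact T.irrefl (hvs ▸ h)
    refine ⟨hur, ?_⟩
    obtain ⟨hadj, hdec⟩ := pathTo_decomp T hT hur
    by_cases huv : par T hT u = v
    · exact huv
    · -- v in support of pathTo (par u); build alternative path
      have hvq : v ∈ (pathTo T hT (par T hT u)).support := by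
        rw [hdec, SimpleGraph.Walk.support_cons] at hvs
        rcases List.mem_cons.mp hvs with h2 | h2
        · exact absurd (h2 ▸ h) (T.irrefl)
        · exact h2
      set q := pathTo T hT (par T hT u) with hqdef
      have hqpath : q.IsPath := pathTo_isPath T hT _
      have hupath := pathTo_isPath T hT u
      rw [hdec, SimpleGraph.Walk.cons_isPath_iff] at hupath
      have hdpath : (q.dropUntil v hvq).IsPath := hqpath.dropUntil hvq
      have hunotd : u ∉ (q.dropUntil v hvq).support := by
        intro hmem
        exact hupath.2 (SimpleGraph.Walk.support_dropUntil_subset q hvq hmem)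
      have hepath : (SimpleGraph.Walk.cons h (q.dropUntil v hvq)).IsPath :=
        hdpath.cons hunotd
      have heq := path_eq T hT _ hepath
      have : par T hT u = (SimpleGraph.Walk.cons h (q.dropUntil v hvq)).getVert 1 := by
        unfold par; exact congrArg (fun p => SimpleGraph.Walk.getVert p 1) heq.symm
      rw [this]
      simp [SimpleGraph.Walk.getVert_cons_succ]
  · right
    have hvr : v ≠ root T hT := by
      rintro rfl
      exact hvs (SimpleGraph.Walk.end_mem_support _)
    have hpath : (SimpleGraph.Walk.cons h.symm (pathTo T hT u)).IsPath :=
      (pathTo_isPath T hT u).cons hvs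
    have heq := path_eq T hT _ hpath
    refine ⟨hvr, ?_⟩
    have : par T hT v = (SimpleGraph.Walk.cons h.symm (pathTo T hT u)).getVert 1 := by
      unfold par; exact congrArg (fun p => SimpleGraph.Walk.getVert p 1) heq.symm
    rw [this]
    simp [SimpleGraph.Walk.getVert_cons_succ]

end TreePath

section Tree
variable {W : Type*} [Fintype W] (T : SimpleGraph W) (hT : T.IsTree)

noncomputable def iota (v : W) : ℕ := (Fintype.equivFin W v : ℕ)

lemma iota_inj : Function.Injective (iota : W → ℕ) := fun a b h =>
  (Fintype.equivFin W).injective (Fin.val_injective h)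

noncomputable def children (v : W) : Finset W :=
  Finset.univ.filter (fun c => c ≠ root T hT ∧ par T hT c = v)

lemma mem_children {c v : W} :
    c ∈ children T hT v ↔ (c ≠ root T hT ∧ par T hT c = v) := by
  unfold children; simp

noncomputable def rnk (c : W) : ℕ := rkF (children T hT (par T hT c)) iota c

noncomputable def sv (v : W) : ℕ :=
  if h : v = root T hT then 0
  else sv (par T hT v) + (if par T hT v = root T hT then 0 else 1) + rnk T hT v
termination_by depth T hT v
decreasing_by exact depth_par_lt T hT h

lemma sv_root : sv T hT (root T hT) = 0 := by
  rw [sv]; simp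

lemma sv_nonroot {v : W} (hv : v ≠ root T hT) :
    sv T hT v = sv T hT (par T hT v)
      + (if par T hT v = root T hT then 0 else 1) + rnk T hT v := by
  rw [sv]; simp [hv]

lemma adj_iff {v w : W} :
    T.Adj v w ↔ (w ∈ children T hT v ∨ (v ≠ root T hT ∧ w = par T hT v)) := by
  constructor
  · intro h
    rcases adj_classify T hT h with ⟨h1, h2⟩ | ⟨h1, h2⟩
    · exact Or.inr ⟨h1, h2.symm⟩
    · exact Or.inl (mem_children T hT |>.mpr ⟨h1, h2⟩)
  · rintro (hc | ⟨h1, rfl⟩)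
    · rcases (mem_children T hT).mp hc with ⟨h1, h2⟩
      exact h2 ▸ (adj_par T hT h1).symm
    · exact adj_par T hT h1

lemma sv_child {c v : W} (hc : c ∈ children T hT v) :
    sv T hT c = sv T hT v + (if v = root T hT then 0 else 1) + rnk T hT c := by
  rcases (mem_children T hT).mp hc with ⟨h1, h2⟩
  rw [sv_nonroot T hT h1, h2]

/-- degrees, avoiding mathlib's degree to dodge instances -/
noncomputable def deg (v : W) : ℕ :=
  (children T hT v).card + (if v = root T hT then 0 else 1)

lemma rnk_lt {c v : W} (hc : c ∈ children T hT v) :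
    rnk T hT c < (children T hT v).card := by
  rcases (mem_children T hT).mp hc with ⟨h1, h2⟩
  unfold rnk
  rw [h2]
  exact rkF_lt (iota_inj.injOn) hc

lemma rnk_inj {c c' v : W} (hc : c ∈ children T hT v) (hc' : c' ∈ children T hT v)
    (h : rnk T hT c = rnk T hT c') : c = c' := by
  rcases (mem_children T hT).mp hc with ⟨h1, h2⟩
  rcases (mem_children T hT).mp hc' with ⟨h1', h2'⟩
  unfold rnk at h
  rw [h2, h2'] at h
  exact rkF_inj (iota_inj.injOn) hc hc' h

lemma rnk_surj {v : W} : ∀ k < (children T hT v).card,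
    ∃ c ∈ children T hT v, rnk T hT c = k := by
  intro k hk
  obtain ⟨c, hc, hrk⟩ := rkF_surj (X := children T hT v) (key := iota)
    (iota_inj.injOn) k hk
  refine ⟨c, hc, ?_⟩
  rcases (mem_children T hT).mp hc with ⟨h1, h2⟩
  unfold rnk
  rw [h2]; exact hrk

/-- Tree edge values. -/
noncomputable def Ht (v w : W) : ℕ :=
  if v ≠ root T hT ∧ par T hT v = w then sv T hT v + 1
  else if w ≠ root T hT ∧ par T hT w = v then sv T hT w + 1 else 0

lemma Ht_symm (v w : W) : Ht T hT v w = Ht T hT w v := by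
  unfold Ht
  by_cases h1 : v ≠ root T hT ∧ par T hT v = w
  · by_cases h2 : w ≠ root T hT ∧ par T hT w = v
    · exact (par_no_swap T hT h1.1 h2.1 h1.2 h2.2).elim
    · simp [h1, h2]
  · by_cases h2 : w ≠ root T hT ∧ par T hT w = v
    · simp [h1, h2]
    · simp [h1, h2]

lemma Ht_par {v : W} (hv : v ≠ root T hT) :
    Ht T hT v (par T hT v) = sv T hT v + 1 := by
  unfold Ht; simp [hv]

lemma Ht_child {c v : W} (hc : c ∈ children T hT v) :
    Ht T hT v c = sv T hT c + 1 := by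
  rcases (mem_children T hT).mp hc with ⟨h1, h2⟩
  unfold Ht
  have hno : ¬(v ≠ root T hT ∧ par T hT v = c) := by
    rintro ⟨hv, hpv⟩
    exact par_no_swap T hT hv h1 hpv h2
  simp [hno, h1, h2]

lemma Ht_mem {v w : W} (h : T.Adj v w) :
    sv T hT v + 1 ≤ Ht T hT v w ∧ Ht T hT v w ≤ sv T hT v + deg T hT v := by
  rcases (adj_iff T hT).mp h with hc | ⟨h1, rfl⟩
  · rw [Ht_child T hT hc, sv_child T hT hc]
    have := rnk_lt T hT hc
    unfold deg
    split_ifs <;> omega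
  · rw [Ht_par T hT h1]
    unfold deg
    rw [if_neg h1]
    omega

lemma Ht_inj {v w w' : W} (h : T.Adj v w) (h' : T.Adj v w')
    (heq : Ht T hT v w = Ht T hT v w') : w = w' := by
  rcases (adj_iff T hT).mp h with hc | ⟨h1, rfl⟩ <;>
    rcases (adj_iff T hT).mp h' with hc' | hp'
  · rw [Ht_child T hT hc, Ht_child T hT hc', sv_child T hT hc, sv_child T hT hc'] at heq
    exact rnk_inj T hT hc hc' (by omega)
  · obtain ⟨h1, rfl⟩ := hp'
    rw [Ht_child T hT hc, Ht_par T hT h1, sv_child T hT hc] at heq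
    simp [h1] at heq
    omega
  · rw [Ht_child T hT hc', Ht_par T hT h1, sv_child T hT hc'] at heq
    simp [h1] at heq
    omega
  · exact hp'.2.symm

lemma Ht_surj {v : W} (κ : ℕ) (h1 : sv T hT v + 1 ≤ κ) (h2 : κ ≤ sv T hT v + deg T hT v) :
    ∃ w, T.Adj v w ∧ Ht T hT v w = κ := by
  by_cases hv : v = root T hT
  · -- all neighbors are children; κ - sv v - 1 is a valid rank
    subst hv
    have hk : κ - sv T hT (root T hT) - 1 < (children T hT (root T hT)).card := by
      unfold deg at h2; simp at h2; omega
    obtain ⟨c, hc, hrk⟩ := rnk_surj T hT _ hk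
    refine ⟨c, (adj_iff T hT).mpr (Or.inl hc), ?_⟩
    rw [Ht_child T hT hc, sv_child T hT hc, hrk]
    simp; omega
  · by_cases hκ : κ = sv T hT v + 1
    · exact ⟨par T hT v, adj_par T hT hv, by rw [Ht_par T hT hv]; omega⟩
    · have hk : κ - sv T hT v - 2 < (children T hT v).card := by
        unfold deg at h2; simp [hv] at h2; omega
      obtain ⟨c, hc, hrk⟩ := rnk_surj T hT _ hk
      refine ⟨c, (adj_iff T hT).mpr (Or.inl hc), ?_⟩
      rw [Ht_child T hT hc, sv_child T hT hc, hrk]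
      simp [hv]; omega

lemma deg_pos_of_adj {v w : W} (h : T.Adj v w) : 1 ≤ deg T hT v := by
  have := (Ht_mem T hT h).1
  have := (Ht_mem T hT h).2
  omega

lemma sv_pred {v : W} (hv : 0 < sv T hT v) : ∃ w, sv T hT w + 1 = sv T hT v := by
  have hvr : v ≠ root T hT := by
    rintro rfl; rw [sv_root] at hv; omega
  have hvc : v ∈ children T hT (par T hT v) := (mem_children T hT).mpr ⟨hvr, rfl⟩
  by_cases hr : rnk T hT v = 0
  · by_cases hp : par T hT v = root T hT
    · exfalso
      have := sv_nonroot T hT hvr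
      rw [hp, sv_root] at this
      simp [hp, hr] at this
      omega
    · refine ⟨par T hT v, ?_⟩
      have := sv_nonroot T hT hvr
      simp [hp, hr] at this
      omega
  · obtain ⟨c, hc, hrk⟩ := rnk_surj T hT (v := par T hT v) (rnk T hT v - 1)
      (by have := rnk_lt T hT hvc; omega)
    refine ⟨c, ?_⟩
    rw [sv_child T hT hc, sv_child T hT hvc, hrk]
    omega

lemma sv_nogap : ∀ j, (∃ v, sv T hT v = j) → ∀ k, k ≤ j → ∃ w, sv T hT w = k := by
  intro j
  induction j with
  | zero =>
    rintro ⟨v, hv⟩ k hk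
    exact ⟨v, by omega⟩
  | succ j ih =>
    rintro ⟨v, hv⟩ k hk
    by_cases hkj : k = j + 1
    · exact ⟨v, by omega⟩
    · obtain ⟨w, hw⟩ := sv_pred T hT (v := v) (by omega)
      exact ih ⟨w, by omega⟩ k (by omega)

noncomputable def mtop : ℕ := Finset.univ.sup (sv T hT)

lemma sv_le_mtop (v : W) : sv T hT v ≤ mtop T hT :=
  Finset.le_sup (Finset.mem_univ v)

lemma exists_sv_mtop : ∃ v, sv T hT v = mtop T hT := by
  obtain ⟨v, _, hv⟩ := Finset.exists_mem_eq_sup Finset.univ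
    ⟨hT.isConnected.nonempty.some, Finset.mem_univ _⟩ (sv T hT)
  exact ⟨v, hv.symm⟩

lemma sv_hits (k : ℕ) (hk : k ≤ mtop T hT) : ∃ w, sv T hT w = k := by
  obtain ⟨v, hv⟩ := exists_sv_mtop T hT
  exact sv_nogap T hT (mtop T hT) ⟨v, hv⟩ k hk

lemma eq_root_of_depth_eq_zero {v : W} (h : depth T hT v = 0) : v = root T hT :=
  SimpleGraph.Walk.Nil.eq (SimpleGraph.Walk.nil_iff_length_eq.mpr h)

lemma exists_child_root (h2 : ∃ w : W, w ≠ root T hT) :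
    ∃ c, c ∈ children T hT (root T hT) := by
  obtain ⟨w, hw⟩ := h2
  have H : ∀ d, ∀ w : W, w ≠ root T hT → depth T hT w ≤ d →
      ∃ c, c ∈ children T hT (root T hT) := by
    intro d
    induction d with
    | zero =>
      intro w hw hd
      exact absurd (eq_root_of_depth_eq_zero T hT (by omega)) hw
    | succ d ih =>
      intro w hw hd
      by_cases hp : par T hT w = root T hT
      · exact ⟨w, (mem_children T hT).mpr ⟨hw, hp⟩⟩
      · exact ih (par T hT w) hp (by have := depth_par_lt T hT hw; omega)
  exact H (depth T hT w) w hw le_rfl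

lemma sv_hits_nonroot (h2 : ∃ w : W, w ≠ root T hT) (k : ℕ) (hk : k ≤ mtop T hT) :
    ∃ w, w ≠ root T hT ∧ sv T hT w = k := by
  rcases Nat.eq_zero_or_pos k with rfl | hpos
  · obtain ⟨c, hc⟩ := exists_child_root T hT h2
    obtain ⟨c0, hc0, hrk0⟩ := rnk_surj T hT (v := root T hT) 0
      (Finset.card_pos.mpr ⟨c, hc⟩)
    have h1 := (mem_children T hT).mp hc0
    refine ⟨c0, h1.1, ?_⟩
    rw [sv_child T hT hc0, hrk0, sv_root]
    simp
  · obtain ⟨w, hw⟩ := sv_hits T hT k hk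
    refine ⟨w, ?_, hw⟩
    rintro rfl
    rw [sv_root] at hw
    omega

lemma Ht_le {v w : W} (h : T.Adj v w) : Ht T hT v w ≤ mtop T hT + 1 := by
  unfold Ht
  split_ifs
  · exact Nat.add_le_add_right (sv_le_mtop T hT v) 1
  · exact Nat.add_le_add_right (sv_le_mtop T hT w) 1
  · omega

/-! ### Sorted positions -/

noncomputable def keyv (v : W) : ℕ := iota v + sv T hT v * Fintype.card W

lemma iota_lt (v : W) : iota v < Fintype.card W := (Fintype.equivFin W v).is_lt

lemma keyv_div (v : W) : keyv T hT v / Fintype.card W = sv T hT v := by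
  unfold keyv
  rw [Nat.add_mul_div_right _ _ (Fintype.card_pos_iff.mpr ⟨v⟩),
    Nat.div_eq_of_lt (iota_lt v)]
  omega

lemma keyv_inj : Function.Injective (keyv T hT) := by
  intro a b h
  have hd : sv T hT a = sv T hT b := by
    rw [← keyv_div T hT a, ← keyv_div T hT b, h]
  apply iota_inj
  unfold keyv at h
  rw [hd] at h
  omega

lemma keyv_mono1 {v w : W} (h : sv T hT v < sv T hT w) : keyv T hT v < keyv T hT w := by
  unfold keyv
  have h1 : (sv T hT v + 1) * Fintype.card W ≤ sv T hT w * Fintype.card W :=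
    Nat.mul_le_mul_right _ h
  have h2 := iota_lt (W := W) v
  nlinarith [Nat.zero_le (iota w)]

lemma keyv_mono2 {v w : W} (h : keyv T hT v ≤ keyv T hT w) : sv T hT v ≤ sv T hT w := by
  by_contra hc
  exact absurd h (by simpa using keyv_mono1 T hT (by omega))

noncomputable def posv (v : W) : ℕ := 1 + rkF Finset.univ (keyv T hT) v

lemma posv_ge1 (v : W) : 1 ≤ posv T hT v := by unfold posv; omega

lemma posv_le (v : W) : posv T hT v ≤ Fintype.card W := by
  have := rkF_lt (X := (Finset.univ : Finset W)) (key := keyv T hT)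
    ((keyv_inj T hT).injOn) (Finset.mem_univ v)
  rw [Finset.card_univ] at this
  unfold posv
  omega

lemma posv_inj : Function.Injective (posv T hT) := by
  intro a b h
  exact rkF_inj ((keyv_inj T hT).injOn) (Finset.mem_univ a) (Finset.mem_univ b)
    (by unfold posv at h; omega)

lemma posv_surj (p : ℕ) (h1 : 1 ≤ p) (h2 : p ≤ Fintype.card W) :
    ∃ v, posv T hT v = p := by
  obtain ⟨v, _, hv⟩ := rkF_surj (X := (Finset.univ : Finset W)) (key := keyv T hT)
    ((keyv_inj T hT).injOn) (p - 1) (by rw [Finset.card_univ]; omega)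
  exact ⟨v, by unfold posv; omega⟩

lemma posv_strict {v w : W} (h : keyv T hT v < keyv T hT w) :
    posv T hT v < posv T hT w := by
  have := rkF_strict (X := (Finset.univ : Finset W)) (Finset.mem_univ v) h
  unfold posv; omega

lemma posv_key {v w : W} (h : posv T hT v ≤ posv T hT w) :
    keyv T hT v ≤ keyv T hT w := by
  by_contra hc
  have := posv_strict T hT (v := w) (w := v) (by omega)
  omega

lemma posv_sv_mono {v w : W} (h : posv T hT v ≤ posv T hT w) :
    sv T hT v ≤ sv T hT w := keyv_mono2 T hT (posv_key T hT h)

lemma posv_sv_strict {v w : W} (h : sv T hT v < sv T hT w) :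
    posv T hT v < posv T hT w := posv_strict T hT (keyv_mono1 T hT h)

noncomputable def vtx (p : ℕ) : W :=
  if h : 1 ≤ p ∧ p ≤ Fintype.card W then (posv_surj T hT p h.1 h.2).choose
  else root T hT

lemma posv_vtx {p : ℕ} (h1 : 1 ≤ p) (h2 : p ≤ Fintype.card W) :
    posv T hT (vtx T hT p) = p := by
  unfold vtx
  rw [dif_pos ⟨h1, h2⟩]
  exact (posv_surj T hT p h1 h2).choose_spec

lemma vtx_posv (v : W) : vtx T hT (posv T hT v) = v :=
  posv_inj T hT (posv_vtx T hT (posv_ge1 T hT v) (posv_le T hT v))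

/-- the sorted sequence of s-values (with the convention σ(p)=m for p>n). -/
noncomputable def sg (p : ℕ) : ℕ :=
  if 1 ≤ p ∧ p ≤ Fintype.card W then sv T hT (vtx T hT p) else mtop T hT

lemma sg_eq {p : ℕ} (h1 : 1 ≤ p) (h2 : p ≤ Fintype.card W) :
    sg T hT p = sv T hT (vtx T hT p) := by
  unfold sg; rw [if_pos ⟨h1, h2⟩]

lemma sg_eq_top {p : ℕ} (h2 : Fintype.card W < p) : sg T hT p = mtop T hT := by
  unfold sg; rw [if_neg (by omega)]

lemma sg_posv (v : W) : sg T hT (posv T hT v) = sv T hT v := by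
  rw [sg_eq T hT (posv_ge1 T hT v) (posv_le T hT v), vtx_posv]

lemma sg_le_mtop (p : ℕ) : sg T hT p ≤ mtop T hT := by
  unfold sg
  split_ifs
  · exact sv_le_mtop T hT _
  · exact le_refl _

lemma sg_mono {p q : ℕ} (h1 : 1 ≤ p) (hpq : p ≤ q) : sg T hT p ≤ sg T hT q := by
  by_cases hq : q ≤ Fintype.card W
  · rw [sg_eq T hT h1 (by omega), sg_eq T hT (by omega) hq]
    apply posv_sv_mono
    rw [posv_vtx T hT h1 (by omega), posv_vtx T hT (by omega) hq]
    exact hpq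
  · rw [sg_eq_top T hT (p := q) (by omega)]
    exact sg_le_mtop T hT p

lemma sg_one (hn : Nonempty W) : sg T hT 1 = 0 := by
  have hc : 1 ≤ Fintype.card W := Fintype.card_pos_iff.mpr hn
  have h0 : sv T hT (vtx T hT 1) ≤ sv T hT (root T hT) := by
    apply posv_sv_mono
    rw [posv_vtx T hT le_rfl hc]
    exact posv_ge1 T hT _
  rw [sv_root] at h0
  rw [sg_eq T hT le_rfl hc]
  omega

lemma sg_card (h1 : 1 ≤ Fintype.card W) : sg T hT (Fintype.card W) = mtop T hT := by
  obtain ⟨vm, hvm⟩ := exists_sv_mtop T hT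
  have hmono : sv T hT vm ≤ sv T hT (vtx T hT (Fintype.card W)) := by
    apply posv_sv_mono
    rw [posv_vtx T hT h1 le_rfl]
    exact posv_le T hT vm
  rw [sg_eq T hT h1 le_rfl]
  have := sv_le_mtop T hT (vtx T hT (Fintype.card W))
  omega

lemma sg_step (p : ℕ) (h1 : 1 ≤ p) : sg T hT (p + 1) ≤ sg T hT p + 1 := by
  by_cases hp : p + 1 ≤ Fintype.card W
  · by_contra hc
    rw [sg_eq T hT (by omega) hp, sg_eq T hT h1 (by omega)] at hc
    have hbd : sv T hT (vtx T hT (p+1)) ≤ mtop T hT := sv_le_mtop T hT _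
    obtain ⟨w, hw⟩ := sv_hits T hT (sv T hT (vtx T hT p) + 1) (by omega)
    have hlow : p < posv T hT w := by
      have h := posv_sv_strict T hT (v := vtx T hT p) (w := w) (by omega)
      rwa [posv_vtx T hT h1 (by omega)] at h
    have hhigh : posv T hT w < p + 1 := by
      have h := posv_sv_strict T hT (v := w) (w := vtx T hT (p+1)) (by omega)
      rwa [posv_vtx T hT (by omega) hp] at h
    omega
  · by_cases hpn : p ≤ Fintype.card W
    · have hpe : p = Fintype.card W := by omega
      subst hpe
      rw [sg_eq_top T hT (by omega), sg_card T hT h1]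
      omega
    · rw [sg_eq_top T hT (by omega), sg_eq_top T hT (by omega)]
      omega

lemma sg_lt_self (p : ℕ) (h1 : 1 ≤ p) : sg T hT p < p := by
  induction p with
  | zero => omega
  | succ p ih =>
    by_cases hp : 1 ≤ p
    · have := sg_step T hT p hp
      have := ih hp
      omega
    · have hp0 : p = 0 := by omega
      subst hp0
      by_cases hW : Nonempty W
      · rw [sg_one T hT hW]; omega
      · haveI := not_nonempty_iff.mp hW
        rw [sg_eq_top T hT (by simp)]
        unfold mtop
        rw [Finset.univ_eq_empty]
        simp

lemma sg_ge (p : ℕ) (h1 : 1 ≤ p) (h2 : p ≤ Fintype.card W + 1) :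
    mtop T hT ≤ sg T hT p + (Fintype.card W + 1 - p) := by
  obtain ⟨d, hd⟩ : ∃ d, p + d = Fintype.card W + 1 :=
    ⟨Fintype.card W + 1 - p, by omega⟩
  clear h2
  induction d generalizing p with
  | zero =>
    rw [sg_eq_top T hT (p := p) (by omega)]
    omega
  | succ d ih =>
    have hstep := sg_step T hT p h1
    have := ih (p + 1) (by omega) (by omega)
    omega

lemma mtop_lt (hn : Nonempty W) : mtop T hT < Fintype.card W := by
  have hc : 1 ≤ Fintype.card W := Fintype.card_pos_iff.mpr hn
  rw [← sg_card T hT hc]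
  exact sg_lt_self T hT _ hc

lemma sg_add {p q : ℕ} (h1 : 1 ≤ p) (hpq : p ≤ q) : sg T hT q ≤ sg T hT p + (q - p) := by
  obtain ⟨d, hd⟩ : ∃ d, p + d = q := ⟨q - p, by omega⟩
  subst hd
  clear hpq
  induction d with
  | zero => simp
  | succ d ih =>
    have h := sg_step T hT (p + d) (by omega)
    have h2 : p + (d + 1) = (p + d) + 1 := by omega
    rw [h2]
    omega

/-! ### The symmetric square -/

noncomputable def PhiR (r : ℕ) (up : Bool) : ℕ :=
  if sg T hT r = sg T hT (r - 1) + 1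
  then sg T hT r + (if up then Fintype.card W else 0)
  else mtop T hT + (r - 1 - sg T hT r)

noncomputable def Phi (S : ℕ) : ℕ :=
  if S ≤ Fintype.card W + 1 then PhiR T hT S false
  else PhiR T hT (S - Fintype.card W) true

noncomputable def tau (v w : W) : ℕ := Phi T hT (posv T hT v + posv T hT w)

lemma tau_symm (v w : W) : tau T hT v w = tau T hT w v := by
  unfold tau; rw [Nat.add_comm]

lemma nb_sg {r : ℕ} (h1 : 2 ≤ r) (hnb : ¬ sg T hT r = sg T hT (r - 1) + 1) :
    sg T hT r = sg T hT (r - 1) := by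
  have hstep := sg_step T hT (r - 1) (by omega)
  have hmono := sg_mono T hT (p := r - 1) (q := r) (by omega) (by omega)
  have : r - 1 + 1 = r := by omega
  rw [this] at hstep
  omega

lemma g_bounds {r : ℕ} (h1 : 2 ≤ r) (h2 : r ≤ Fintype.card W + 1)
    (hnb : ¬ sg T hT r = sg T hT (r - 1) + 1) :
    1 ≤ r - 1 - sg T hT r ∧ r - 1 - sg T hT r ≤ Fintype.card W - mtop T hT := by
  have heq := nb_sg T hT h1 hnb
  have hlt := sg_lt_self T hT (r - 1) (by omega)
  have hge := sg_ge T hT r (by omega) h2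
  omega

lemma bd_unique {r r' : ℕ} (h1 : 2 ≤ r) (hlt : r < r')
    (hb' : sg T hT r' = sg T hT (r' - 1) + 1) (heq : sg T hT r = sg T hT r') : False := by
  have hmono := sg_mono T hT (p := r) (q := r' - 1) (by omega) (by omega)
  omega

lemma g_strict {r r' : ℕ} (h1 : 2 ≤ r) (hlt : r < r') (h2 : r' ≤ Fintype.card W + 1)
    (hnb : ¬ sg T hT r = sg T hT (r - 1) + 1)
    (hnb' : ¬ sg T hT r' = sg T hT (r' - 1) + 1) :
    r - 1 - sg T hT r < r' - 1 - sg T hT r' := by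
  have heq := nb_sg T hT h1 hnb
  have heq' := nb_sg T hT (by omega) hnb'
  have hadd := sg_add T hT (p := r) (q := r' - 1) (by omega) (by omega)
  have hlt1 := sg_lt_self T hT (r - 1) (by omega)
  have hlt2 := sg_lt_self T hT (r' - 1) (by omega)
  omega

lemma tau_decomp (v w : W) :
    ∃ r, 2 ≤ r ∧ r ≤ Fintype.card W + 1 ∧
      ((posv T hT v < r ∧ posv T hT w + posv T hT v = r ∧
          tau T hT v w = PhiR T hT r false) ∨
       (r ≤ posv T hT v ∧ posv T hT w + posv T hT v = r + Fintype.card W ∧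
          tau T hT v w = PhiR T hT r true)) := by
  have hP1 := posv_ge1 T hT v
  have hP2 := posv_le T hT v
  have hy1 := posv_ge1 T hT w
  have hy2 := posv_le T hT w
  by_cases hS : posv T hT v + posv T hT w ≤ Fintype.card W + 1
  · refine ⟨posv T hT v + posv T hT w, by omega, hS, Or.inl ⟨by omega, by omega, ?_⟩⟩
    unfold tau Phi
    rw [if_pos hS]
  · refine ⟨posv T hT v + posv T hT w - Fintype.card W, by omega, by omega,
      Or.inr ⟨by omega, by omega, ?_⟩⟩
    unfold tau Phi
    rw [if_neg hS]

lemma PhiR_false (r : ℕ) : PhiR T hT r false =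
    if sg T hT r = sg T hT (r - 1) + 1 then sg T hT r
    else mtop T hT + (r - 1 - sg T hT r) := by
  unfold PhiR; simp

lemma PhiR_true (r : ℕ) : PhiR T hT r true =
    if sg T hT r = sg T hT (r - 1) + 1 then sg T hT r + Fintype.card W
    else mtop T hT + (r - 1 - sg T hT r) := by
  unfold PhiR; simp

lemma tau_mem (v w : W) :
    sv T hT v + 1 ≤ tau T hT v w ∧ tau T hT v w ≤ sv T hT v + Fintype.card W := by
  have hmt := mtop_lt T hT ⟨v⟩
  have hsvm := sv_le_mtop T hT v
  have hP1 := posv_ge1 T hT v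
  have hP2 := posv_le T hT v
  obtain ⟨r, hr1, hr2, hcase⟩ := tau_decomp T hT v w
  have hsgm := sg_le_mtop T hT r
  rcases hcase with ⟨hPr, hy, htau⟩ | ⟨hPr, hy, htau⟩
  · rw [htau, PhiR_false]
    split_ifs with hb
    · have hmono : sv T hT v ≤ sg T hT (r - 1) := by
        have h := sg_mono T hT (p := posv T hT v) (q := r - 1) (by omega) (by omega)
        rwa [sg_posv] at h
      omega
    · have hg := g_bounds T hT hr1 hr2 hb
      omega
  · rw [htau, PhiR_true]
    split_ifs with hb
    · have hmono : sg T hT r ≤ sv T hT v := by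
        have h := sg_mono T hT (p := r) (q := posv T hT v) (by omega) hPr
        rwa [sg_posv] at h
      omega
    · have hg := g_bounds T hT hr1 hr2 hb
      omega

lemma PhiR_r_inj {r r' : ℕ} {u u' : Bool} (hW : Nonempty W)
    (hr1 : 2 ≤ r) (hr2 : r ≤ Fintype.card W + 1)
    (hr1' : 2 ≤ r') (hr2' : r' ≤ Fintype.card W + 1)
    (h : PhiR T hT r u = PhiR T hT r' u') : r = r' := by
  have hmt := mtop_lt T hT hW
  have hsg1 := sg_le_mtop T hT r
  have hsg2 := sg_le_mtop T hT r'
  unfold PhiR at h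
  by_cases hb : sg T hT r = sg T hT (r - 1) + 1 <;>
    by_cases hb' : sg T hT r' = sg T hT (r' - 1) + 1
  · rw [if_pos hb, if_pos hb'] at h
    have hval : sg T hT r = sg T hT r' := by
      cases u <;> cases u' <;> simp at h <;> omega
    rcases lt_trichotomy r r' with hlt | heq | hgt
    · exact absurd (bd_unique T hT hr1 hlt hb' hval) not_false
    · exact heq
    · exact absurd (bd_unique T hT hr1' hgt hb hval.symm) not_false
  · rw [if_pos hb, if_neg hb'] at h
    have hg := g_bounds T hT hr1' hr2' hb'
    cases u <;> simp at h <;> omega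
  · rw [if_neg hb, if_pos hb'] at h
    have hg := g_bounds T hT hr1 hr2 hb
    cases u' <;> simp at h <;> omega
  · rw [if_neg hb, if_neg hb'] at h
    have hg := g_bounds T hT hr1 hr2 hb
    have hg' := g_bounds T hT hr1' hr2' hb'
    have heq : r - 1 - sg T hT r = r' - 1 - sg T hT r' := by omega
    rcases lt_trichotomy r r' with hlt | hq | hgt
    · have := g_strict T hT hr1 hlt hr2' hb hb'; omega
    · exact hq
    · have := g_strict T hT hr1' hgt hr2 hb' hb; omega

lemma tau_inj {v w w' : W} (h : tau T hT v w = tau T hT v w') : w = w' := by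
  obtain ⟨r, hr1, hr2, hcase⟩ := tau_decomp T hT v w
  obtain ⟨r', hr1', hr2', hcase'⟩ := tau_decomp T hT v w'
  apply posv_inj T hT
  rcases hcase with ⟨hPr, hy, htau⟩ | ⟨hPr, hy, htau⟩ <;>
    rcases hcase' with ⟨hPr', hy', htau'⟩ | ⟨hPr', hy', htau'⟩ <;>
      rw [htau, htau'] at h <;>
        have hrr := PhiR_r_inj T hT ⟨v⟩ hr1 hr2 hr1' hr2' h <;> omega

/-- row surjectivity -/
lemma tau_surj_row (v : W) (c : ℕ) (h1 : sv T hT v + 1 ≤ c)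
    (h2 : c ≤ sv T hT v + Fintype.card W) : ∃ w, tau T hT v w = c := by
  classical
  have hW : Nonempty W := ⟨v⟩
  have hn1 : 1 ≤ Fintype.card W := Fintype.card_pos_iff.mpr hW
  have hmt := mtop_lt T hT hW
  have hsvm := sv_le_mtop T hT v
  have hP1 := posv_ge1 T hT v
  have hP2 := posv_le T hT v
  -- helper to produce w from a position y
  have mk : ∀ y, 1 ≤ y → y ≤ Fintype.card W → ∃ w : W, posv T hT w = y :=
    fun y hy1 hy2 => posv_surj T hT y hy1 hy2
  by_cases hc1 : c ≤ mtop T hT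
  · -- boundary, low flag
    obtain ⟨r, ha, hb2, hval, hprev⟩ := climb (sg T hT) 1 (Fintype.card W)
      hn1 (fun p hp _ => sg_step T hT p hp) c
      (by rw [sg_one T hT hW]; omega) (by rw [sg_card T hT hn1]; omega)
    have hbd : sg T hT r = sg T hT (r - 1) + 1 := by
      have hstep := sg_step T hT (r - 1) (by omega)
      have hre : r - 1 + 1 = r := by omega
      rw [hre] at hstep
      omega
    have hrP : posv T hT v < r := by
      by_contra hcon
      have hm := sg_mono T hT (p := r) (q := posv T hT v) (by omega) (by omega)
      rw [sg_posv] at hm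
      omega
    obtain ⟨w, hw⟩ := mk (r - posv T hT v) (by omega) (by omega)
    refine ⟨w, ?_⟩
    unfold tau Phi
    rw [hw]
    rw [if_pos (by omega), PhiR_false]
    have hre : posv T hT v + (r - posv T hT v) = r := by omega
    rw [hre, if_pos hbd]
    exact hval
  · by_cases hc2 : c ≤ Fintype.card W
    · -- non-boundary
      set f : ℕ → ℕ := fun p => p - 1 - sg T hT p with hf
      have hstepf : ∀ p, 1 ≤ p → p < Fintype.card W + 1 → f (p + 1) ≤ f p + 1 := by
        intro p hp _
        have := sg_mono T hT (p := p) (q := p + 1) hp (by omega)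
        have := sg_lt_self T hT p hp
        simp only [hf]
        omega
      obtain ⟨r, ha, hb2, hval, hprev⟩ := climb f 1 (Fintype.card W + 1)
        (by omega) hstepf (c - mtop T hT)
        (by simp only [hf]; rw [sg_one T hT hW]; omega)
        (by simp only [hf]; rw [sg_eq_top T hT (by omega)]; omega)
      have hnb : ¬ sg T hT r = sg T hT (r - 1) + 1 := by
        intro hbd
        have hle : sg T hT (r-1) ≤ r - 1 - 1 := by
          have := sg_lt_self T hT (r - 1) (by omega)
          omega
        simp only [hf] at hval hprev
        omega
      -- choose flag according to position of r relative to posv v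
      by_cases hrP : posv T hT v < r
      · obtain ⟨w, hw⟩ := mk (r - posv T hT v) (by omega) (by omega)
        refine ⟨w, ?_⟩
        unfold tau Phi
        rw [hw]
        rw [if_pos (by omega), PhiR_false]
        have hre : posv T hT v + (r - posv T hT v) = r := by omega
        rw [hre, if_neg hnb]
        simp only [hf] at hval
        omega
      · obtain ⟨w, hw⟩ := mk (r + Fintype.card W - posv T hT v) (by omega) (by omega)
        refine ⟨w, ?_⟩
        unfold tau Phi
        rw [hw]
        have hre : posv T hT v + (r + Fintype.card W - posv T hT v)
            = r + Fintype.card W := by omega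
        rw [hre, if_neg (by omega)]
        have hre2 : r + Fintype.card W - Fintype.card W = r := by omega
        rw [hre2, PhiR_true, if_neg hnb]
        simp only [hf] at hval
        omega
    · -- boundary, up flag : c ∈ [n+1, sv v + n]
      obtain ⟨r, ha, hb2, hval, hprev⟩ := climb (sg T hT) 1 (Fintype.card W)
        hn1 (fun p hp _ => sg_step T hT p hp) (c - Fintype.card W)
        (by rw [sg_one T hT hW]; omega) (by rw [sg_card T hT hn1]; omega)
      have hbd : sg T hT r = sg T hT (r - 1) + 1 := by
        have hstep := sg_step T hT (r - 1) (by omega)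
        have hre : r - 1 + 1 = r := by omega
        rw [hre] at hstep
        omega
      have hrP : r ≤ posv T hT v := by
        by_contra hcon
        -- r - 1 ≥ posv v would give sg(r-1) ≥ sv v ≥ c - n, contradicting hprev
        have hm := sg_mono T hT (p := posv T hT v) (q := r - 1) (by omega) (by omega)
        rw [sg_posv] at hm
        omega
      obtain ⟨w, hw⟩ := mk (r + Fintype.card W - posv T hT v) (by omega) (by omega)
      refine ⟨w, ?_⟩
      unfold tau Phi
      rw [hw]
      have hre : posv T hT v + (r + Fintype.card W - posv T hT v)
          = r + Fintype.card W := by omega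
      rw [hre, if_neg (by omega), ]
      have hre2 : r + Fintype.card W - Fintype.card W = r := by omega
      rw [hre2, PhiR_true, if_pos hbd]
      omega

lemma tau_surj_global (c : ℕ) (hW : Nonempty W) (h1 : 1 ≤ c)
    (h2 : c ≤ Fintype.card W + mtop T hT) : ∃ v w, tau T hT v w = c := by
  have hn1 : 1 ≤ Fintype.card W := Fintype.card_pos_iff.mpr hW
  by_cases hc : c ≤ Fintype.card W
  · obtain ⟨w, hw⟩ := tau_surj_row T hT (root T hT) c (by rw [sv_root]; omega)
      (by rw [sv_root]; omega)
    exact ⟨root T hT, w, hw⟩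
  · obtain ⟨v, hv⟩ := sv_hits T hT (c - Fintype.card W) (by omega)
    obtain ⟨w, hw⟩ := tau_surj_row T hT v c (by omega) (by omega)
    exact ⟨v, w, hw⟩

end Tree


section Assembly
variable {V : Type*} {W : Type*} [Fintype W]
  (G : SimpleGraph V) (T : SimpleGraph W) (hT : T.IsTree) (cG : Sym2 V → ℕ)

noncomputable def aU (u : V) : ℕ := sInf (specS G cG u)
noncomputable def bU (u : V) : ℕ := sSup (specS G cG u)

lemma specG_sub {t : ℕ} (hcol : IsIntCol G cG t) (u : V) :
    ∀ k ∈ specS G cG u, 1 ≤ k ∧ k ≤ t := by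
  rintro k ⟨u', hadj, rfl⟩
  exact hcol.2.1 _ ((G.mem_edgeSet).mpr hadj)

lemma specG_struct {t : ℕ} (hcol : IsIntCol G cG t) (u u0 : V) (h0 : G.Adj u u0) :
    1 ≤ aU G cG u ∧ bU G cG u ≤ t ∧ aU G cG u ≤ bU G cG u ∧
    (∀ k, aU G cG u ≤ k → k ≤ bU G cG u → k ∈ specS G cG u) ∧
    (∀ u', G.Adj u u' → aU G cG u ≤ cG s(u, u') ∧ cG s(u, u') ≤ bU G cG u) := by
  have hne : (specS G cG u).Nonempty := ⟨cG s(u, u0), u0, h0, rfl⟩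
  have hbdd : BddAbove (specS G cG u) :=
    ⟨t, fun k hk => (specG_sub G cG hcol u k hk).2⟩
  have haU : aU G cG u ∈ specS G cG u := Nat.sInf_mem hne
  have hbU : bU G cG u ∈ specS G cG u := Nat.sSup_mem hne hbdd
  refine ⟨(specG_sub G cG hcol u _ haU).1, (specG_sub G cG hcol u _ hbU).2,
    Nat.sInf_le hbU, fun k hk1 hk2 => hcol.2.2.2 u _ haU _ hbU k hk1 hk2,
    fun u' hadj => ⟨Nat.sInf_le ⟨u', hadj, rfl⟩, le_csSup hbdd ⟨u', hadj, rfl⟩⟩⟩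

lemma specG_empty (u : V) (h : ∀ u', ¬ G.Adj u u') :
    aU G cG u = 0 ∧ bU G cG u = 0 := by
  have : specS G cG u = ∅ := by
    ext k
    simp only [Set.mem_empty_iff_false, iff_false]
    rintro ⟨u', hadj, _⟩
    exact h u' hadj
  unfold aU bU
  rw [this]
  constructor
  · exact Nat.sInf_empty
  · exact csSup_empty

lemma bU_le_t {t : ℕ} (hcol : IsIntCol G cG t) (u : V) : bU G cG u ≤ t := by
  by_cases h : ∃ u', G.Adj u u'
  · obtain ⟨u0, h0⟩ := h
    exact (specG_struct G cG hcol u u0 h0).2.1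
  · push_neg at h
    rw [(specG_empty G cG u h).2]
    omega

lemma exists_edge_color {t : ℕ} (hcol : IsIntCol G cG t) (k : ℕ)
    (h1 : 1 ≤ k) (h2 : k ≤ t) : ∃ u u', G.Adj u u' ∧ cG s(u, u') = k := by
  obtain ⟨e, he, hce⟩ := hcol.2.2.1 k h1 h2
  induction e using Sym2.ind with
  | _ u u' => exact ⟨u, u', (G.mem_edgeSet).mp he, hce⟩

lemma lexComp_adj (p q : V × W) :
    (lexComp G T).Adj p q ↔ (G.Adj p.1 q.1 ∨ (p.1 = q.1 ∧ T.Adj p.2 q.2)) :=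
  Iff.rfl

noncomputable def FF : Sym2 (V × W) → ℕ :=
  Sym2.lift ⟨fun p q =>
    if p.1 = q.1 then Fintype.card W * bU G cG p.1 + Ht T hT p.2 q.2
    else Fintype.card W * (cG s(p.1, q.1) - 1) + tau T hT p.2 q.2, by
      intro p q
      dsimp only
      by_cases h : p.1 = q.1
      · rw [if_pos h, if_pos h.symm, Ht_symm, h]
      · rw [if_neg h, if_neg (Ne.symm h), tau_symm, Sym2.eq_swap]⟩

lemma FF_tree (u : V) (i j : W) :
    FF G T hT cG s((u, i), (u, j)) = Fintype.card W * bU G cG u + Ht T hT i j := by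
  unfold FF
  rw [Sym2.lift_mk]
  dsimp only
  rw [if_pos rfl]

lemma FF_cross {u u' : V} (h : u ≠ u') (i j : W) :
    FF G T hT cG s((u, i), (u', j)) =
      Fintype.card W * (cG s(u, u') - 1) + tau T hT i j := by
  unfold FF
  rw [Sym2.lift_mk]
  dsimp only
  rw [if_neg h]

lemma spec_eq {t : ℕ} (hcol : IsIntCol G cG t) (u : V) (i : W) :
    specS (lexComp G T) (FF G T hT cG) (u, i) =
      Set.Icc (Fintype.card W * (aU G cG u - 1) + sv T hT i + 1)
              (Fintype.card W * bU G cG u + sv T hT i + deg T hT i) := by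
  have hn1 : 1 ≤ Fintype.card W := Fintype.card_pos_iff.mpr ⟨i⟩
  ext k
  simp only [Set.mem_Icc]
  constructor
  · rintro ⟨⟨u', j⟩, hadj, rfl⟩
    rcases (lexComp_adj G T _ _).mp hadj with hg | ⟨heq, ht⟩
    · dsimp only at hg
      have hne : u ≠ u' := hg.ne
      rw [FF_cross G T hT cG hne]
      obtain ⟨ha1, hbt, hab, hintv, hnb⟩ := specG_struct G cG hcol u u' hg
      obtain ⟨hk1, hk2⟩ := hnb u' hg
      have htm := tau_mem T hT i j
      constructor
      · have hm : Fintype.card W * (aU G cG u - 1) ≤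
            Fintype.card W * (cG s(u, u') - 1) :=
          Nat.mul_le_mul_left _ (by omega)
        omega
      · have hm : Fintype.card W * (cG s(u, u') - 1) + Fintype.card W ≤
            Fintype.card W * bU G cG u := by
          have h := Nat.mul_le_mul_left (Fintype.card W)
            (show cG s(u, u') - 1 + 1 ≤ bU G cG u by omega)
          rw [Nat.mul_succ] at h
          exact h
        omega
    · simp only at heq
      obtain rfl : u = u' := heq
      dsimp only at ht
      rw [FF_tree]
      have hht := Ht_mem T hT ht
      have hmm : Fintype.card W * (aU G cG u - 1) ≤ Fintype.card W * bU G cG u := by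
        apply Nat.mul_le_mul_left
        by_cases hiso : ∃ w, G.Adj u w
        · obtain ⟨u0, h0⟩ := hiso
          obtain ⟨_, _, hab, _, _⟩ := specG_struct G cG hcol u u0 h0
          omega
        · push_neg at hiso
          have := specG_empty G cG u hiso
          omega
      omega
  · rintro ⟨hk1, hk2⟩
    by_cases hcr : k ≤ Fintype.card W * bU G cG u + sv T hT i
    · -- cross
      have hiso : ∃ u', G.Adj u u' := by
        by_contra hno
        push_neg at hno
        obtain ⟨ha0, hb0⟩ := specG_empty G cG u hno
        rw [ha0] at hk1
        rw [hb0] at hcr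
        simp only [Nat.mul_zero] at hk1 hcr
        omega
      obtain ⟨u0, h0⟩ := hiso
      obtain ⟨ha1, hbt, hab, hintv, hnb⟩ := specG_struct G cG hcol u u0 h0
      set x := k - sv T hT i - 1 with hx
      have hxl : Fintype.card W * (aU G cG u - 1) ≤ x := by omega
      have hxu : x < Fintype.card W * bU G cG u := by omega
      set q := x / Fintype.card W with hq
      have hmod := Nat.div_add_mod x (Fintype.card W)
      rw [← hq] at hmod
      have hrem : x % Fintype.card W < Fintype.card W := Nat.mod_lt _ (by omega)
      have hql : aU G cG u - 1 ≤ q := by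
        rw [hq]
        exact (Nat.le_div_iff_mul_le (by omega)).mpr (by rw [Nat.mul_comm]; exact hxl)
      have hqu : q < bU G cG u := by
        rw [hq]
        exact (Nat.div_lt_iff_lt_mul (by omega)).mpr (by rw [Nat.mul_comm] at hxu; exact hxu)
      obtain ⟨u', hadj', hcu⟩ := hintv (q + 1) (by omega) (by omega)
      have hcrange : sv T hT i + 1 ≤ k - Fintype.card W * q ∧
          k - Fintype.card W * q ≤ sv T hT i + Fintype.card W := by
        constructor <;> omega
      obtain ⟨j, hj⟩ := tau_surj_row T hT i (k - Fintype.card W * q) hcrange.1 hcrange.2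
      refine ⟨(u', j), (lexComp_adj G T _ _).mpr (Or.inl hadj'), ?_⟩
      rw [FF_cross G T hT cG hadj'.ne, hcu, hj, Nat.add_sub_cancel]
      omega
    · -- tree
      have hcrange : sv T hT i + 1 ≤ k - Fintype.card W * bU G cG u ∧
          k - Fintype.card W * bU G cG u ≤ sv T hT i + deg T hT i := by
        constructor <;> omega
      obtain ⟨w, hadjw, hw⟩ := Ht_surj T hT _ hcrange.1 hcrange.2
      refine ⟨(u, w), (lexComp_adj G T _ _).mpr (Or.inr ⟨rfl, hadjw⟩), ?_⟩
      rw [FF_tree, hw]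
      omega

lemma eproper {t : ℕ} (hcol : IsIntCol G cG t) :
    EProper (lexComp G T) (FF G T hT cG) := by
  rintro ⟨u, i⟩ ⟨u1, j1⟩ ⟨u2, j2⟩ h1 h2 hne heq
  have hn1 : 1 ≤ Fintype.card W := Fintype.card_pos_iff.mpr ⟨i⟩
  rcases (lexComp_adj G T _ _).mp h1 with hg1 | ⟨he1, ht1⟩ <;>
    rcases (lexComp_adj G T _ _).mp h2 with hg2 | ⟨he2, ht2⟩
  · -- cross cross
    dsimp only at hg1 hg2
    rw [FF_cross G T hT cG hg1.ne, FF_cross G T hT cG hg2.ne] at heq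
    obtain ⟨ha1, hbt, hab, hintv, hnb⟩ := specG_struct G cG hcol u u1 hg1
    obtain ⟨hl1, hr1⟩ := hnb u1 hg1
    obtain ⟨hl2, hr2⟩ := hnb u2 hg2
    have htm1 := tau_mem T hT i j1
    have htm2 := tau_mem T hT i j2
    have hkeq : cG s(u, u1) = cG s(u, u2) := by
      rcases lt_trichotomy (cG s(u, u1)) (cG s(u, u2)) with hlt | he | hgt
      · exfalso
        have h := Nat.mul_le_mul_left (Fintype.card W)
          (show cG s(u, u1) - 1 + 1 ≤ cG s(u, u2) - 1 by omega)
        rw [Nat.mul_succ] at h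
        omega
      · exact he
      · exfalso
        have h := Nat.mul_le_mul_left (Fintype.card W)
          (show cG s(u, u2) - 1 + 1 ≤ cG s(u, u1) - 1 by omega)
        rw [Nat.mul_succ] at h
        omega
    rw [hkeq] at heq
    have hteq : tau T hT i j1 = tau T hT i j2 := by omega
    have hjeq := tau_inj T hT hteq
    by_cases huu : u1 = u2
    · exact hne (by rw [huu, hjeq])
    · exact hcol.1 u u1 u2 hg1 hg2 huu hkeq
  · -- cross tree
    simp only at he2
    obtain rfl : u = u2 := he2
    dsimp only at ht2 hg1
    rw [FF_cross G T hT cG hg1.ne, FF_tree] at heq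
    obtain ⟨ha1, hbt, hab, hintv, hnb⟩ := specG_struct G cG hcol u u1 hg1
    obtain ⟨hl1, hr1⟩ := hnb u1 hg1
    have htm1 := tau_mem T hT i j1
    have htm2 := Ht_mem T hT ht2
    have hstep : Fintype.card W * (cG s(u, u1) - 1) + Fintype.card W ≤
        Fintype.card W * bU G cG u := by
      have h := Nat.mul_le_mul_left (Fintype.card W)
        (show cG s(u, u1) - 1 + 1 ≤ bU G cG u by omega)
      rw [Nat.mul_succ] at h
      exact h
    omega
  · -- tree cross
    simp only at he1
    obtain rfl : u = u1 := he1
    dsimp only at ht1 hg2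
    rw [FF_cross G T hT cG hg2.ne, FF_tree] at heq
    obtain ⟨ha1, hbt, hab, hintv, hnb⟩ := specG_struct G cG hcol u u2 hg2
    obtain ⟨hl2, hr2⟩ := hnb u2 hg2
    have htm1 := Ht_mem T hT ht1
    have htm2 := tau_mem T hT i j2
    have hstep : Fintype.card W * (cG s(u, u2) - 1) + Fintype.card W ≤
        Fintype.card W * bU G cG u := by
      have h := Nat.mul_le_mul_left (Fintype.card W)
        (show cG s(u, u2) - 1 + 1 ≤ bU G cG u by omega)
      rw [Nat.mul_succ] at h
      exact h
    omega
  · -- tree tree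
    simp only at he1 he2
    obtain rfl : u = u1 := he1
    obtain rfl : u = u2 := he2
    dsimp only at ht1 ht2
    rw [FF_tree, FF_tree] at heq
    have := Ht_inj T hT ht1 ht2 (by omega)
    exact hne (by rw [this])

end Assembly
end Stmt14Aux

open Stmt14Aux in

/-- If G is interval colorable and T is a tree, then G[T] is interval colorable. -/
theorem stmt14 {V W : Type*} [Fintype W] (G : SimpleGraph V) (T : SimpleGraph W)
    (hG : IntColorable G) (hT : T.IsTree) :
    IntColorable (lexComp G T) := by
  classical
  obtain ⟨t, cG, hcol⟩ := hG
  by_cases hV : Nonempty V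
  · haveI := hV
    have hW : Nonempty W := hT.isConnected.nonempty
    have hn1 : 1 ≤ Fintype.card W := Fintype.card_pos_iff.mpr hW
    refine ⟨Fintype.card W * t + mtop T hT + (if 2 ≤ Fintype.card W then 1 else 0),
      FF G T hT cG, eproper G T hT cG hcol, ?_, ?_, ?_⟩
    · -- bounds
      intro e he
      induction e using Sym2.ind with
      | _ p q =>
        obtain ⟨up, ip⟩ := p
        obtain ⟨uq, iq⟩ := q
        have hadj : (lexComp G T).Adj (up, ip) (uq, iq) :=
          ((lexComp G T).mem_edgeSet).mp he
        rcases (lexComp_adj G T _ _).mp hadj with hg | ⟨hequ, htadj⟩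
        · dsimp only at hg
          rw [FF_cross G T hT cG hg.ne]
          have htm := tau_mem T hT ip iq
          have hsv := sv_le_mtop T hT ip
          have hmt := mtop_lt T hT hW
          obtain ⟨ha1, hbt, _, _, hnb⟩ := specG_struct G cG hcol up uq hg
          obtain ⟨hl, hr⟩ := hnb uq hg
          have h := Nat.mul_le_mul_left (Fintype.card W)
            (show cG s(up, uq) - 1 + 1 ≤ t by omega)
          rw [Nat.mul_succ] at h
          omega
        · simp only at hequ
          obtain rfl : up = uq := hequ
          dsimp only at htadj
          rw [FF_tree]
          have h1 := Ht_mem T hT htadj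
          have h2 := Ht_le T hT htadj
          have hb := bU_le_t G cG hcol up
          have hmul : Fintype.card W * bU G cG up ≤ Fintype.card W * t :=
            Nat.mul_le_mul_left _ hb
          have hn2 : 2 ≤ Fintype.card W := by
            by_contra hsmall
            have hc1 : Fintype.card W ≤ 1 := by omega
            have : ip = iq := Fintype.card_le_one_iff.mp hc1 ip iq
            exact T.irrefl (this ▸ htadj)
          rw [if_pos hn2]
          omega
    · -- surjectivity
      intro k hk1 hk2
      by_cases hGE : ∃ u u' : V, G.Adj u u'
      · obtain ⟨ug, ug', hgadj⟩ := hGE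
        have ht1 : 1 ≤ t := by
          have := hcol.2.1 _ ((G.mem_edgeSet).mpr hgadj)
          omega
        by_cases hk : k ≤ Fintype.card W * t + mtop T hT
        · obtain ⟨q0, r0, hqr, hr0⟩ :
              ∃ q r, k - 1 = Fintype.card W * q + r ∧ r < Fintype.card W :=
            ⟨(k - 1) / Fintype.card W, (k - 1) % Fintype.card W,
              (Nat.div_add_mod _ _).symm, Nat.mod_lt _ (by omega)⟩
          by_cases hqt : q0 + 1 ≤ t
          · obtain ⟨u, u', hadj, hcu⟩ := exists_edge_color G cG hcol (q0 + 1)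
              (by omega) hqt
            obtain ⟨v1, w1, htv⟩ := tau_surj_global T hT (k - Fintype.card W * q0)
              hW (by omega) (by
                have := mtop_lt T hT hW
                omega)
            refine ⟨s((u, v1), (u', w1)),
              ((lexComp G T).mem_edgeSet).mpr ((lexComp_adj G T _ _).mpr (Or.inl hadj)), ?_⟩
            rw [FF_cross G T hT cG hadj.ne, hcu, htv, Nat.add_sub_cancel]
            omega
          · have hge : Fintype.card W * t ≤ Fintype.card W * q0 :=
              Nat.mul_le_mul_left _ (by omega)
            have hkt : Fintype.card W * t < k := by omega
            obtain ⟨u, u', hadj, hcu⟩ := exists_edge_color G cG hcol t (by omega) le_rfl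
            have hmm : Fintype.card W * (t - 1) + Fintype.card W ≤ Fintype.card W * t := by
              have h := Nat.mul_le_mul_left (Fintype.card W) (show t - 1 + 1 ≤ t by omega)
              rw [Nat.mul_succ] at h
              exact h
            have hmm2 : Fintype.card W * t ≤ Fintype.card W * (t - 1) + Fintype.card W := by
              have h := Nat.mul_le_mul_left (Fintype.card W) (show t ≤ t - 1 + 1 by omega)
              rw [Nat.mul_succ] at h
              exact h
            obtain ⟨v1, w1, htv⟩ := tau_surj_global T hT (k - Fintype.card W * (t - 1))
              hW (by omega) (by omega)
            refine ⟨s((u, v1), (u', w1)),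
              ((lexComp G T).mem_edgeSet).mpr ((lexComp_adj G T _ _).mpr (Or.inl hadj)), ?_⟩
            rw [FF_cross G T hT cG hadj.ne, hcu, htv]
            omega
        · -- the very top color
          have hn2 : 2 ≤ Fintype.card W := by
            by_contra hs
            rw [if_neg hs] at hk2
            omega
          have hke : k = Fintype.card W * t + mtop T hT + 1 := by
            rw [if_pos hn2] at hk2
            omega
          obtain ⟨u, u', hadj, hcu⟩ := exists_edge_color G cG hcol t (by omega) le_rfl
          have hbu : bU G cG u = t := by
            obtain ⟨_, hbt, _, _, hnb⟩ := specG_struct G cG hcol u u' hadj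
            have := (hnb u' hadj).2
            omega
          have hex : ∃ w : W, w ≠ root T hT := by
            by_contra hall
            push_neg at hall
            have : Fintype.card W ≤ 1 :=
              Fintype.card_le_one_iff.mpr (fun a b => by rw [hall a, hall b])
            omega
          obtain ⟨w, hwr, hsw⟩ := sv_hits_nonroot T hT hex (mtop T hT) le_rfl
          refine ⟨s((u, w), (u, par T hT w)),
            ((lexComp G T).mem_edgeSet).mpr
              ((lexComp_adj G T _ _).mpr (Or.inr ⟨rfl, adj_par T hT hwr⟩)), ?_⟩
          rw [FF_tree, Ht_par T hT hwr, hsw, hbu, hke]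
          omega
      · -- G has no edges
        have ht0 : t = 0 := by
          by_contra h0
          obtain ⟨u, u', hadj, _⟩ := exists_edge_color G cG hcol 1 le_rfl (by omega)
          exact hGE ⟨u, u', hadj⟩
        subst ht0
        by_cases hn2 : 2 ≤ Fintype.card W
        · rw [if_pos hn2] at hk2
          simp only [Nat.mul_zero, Nat.zero_add] at hk2
          have hex : ∃ w : W, w ≠ root T hT := by
            by_contra hall
            push_neg at hall
            have : Fintype.card W ≤ 1 :=
              Fintype.card_le_one_iff.mpr (fun a b => by rw [hall a, hall b])
            omega
          obtain ⟨w, hwr, hsw⟩ := sv_hits_nonroot T hT hex (k - 1) (by omega)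
          obtain ⟨u0⟩ := hV
          have hbu : bU G cG u0 = 0 := by
            push_neg at hGE
            exact (specG_empty G cG u0 (fun u' => hGE u0 u')).2
          refine ⟨s((u0, w), (u0, par T hT w)),
            ((lexComp G T).mem_edgeSet).mpr
              ((lexComp_adj G T _ _).mpr (Or.inr ⟨rfl, adj_par T hT hwr⟩)), ?_⟩
          rw [FF_tree, Ht_par T hT hwr, hsw, hbu]
          omega
        · have := mtop_lt T hT hW
          rw [if_neg hn2] at hk2
          omega
    · -- interval condition
      rintro ⟨u, i⟩ a ha b hb k hak hkb
      rw [spec_eq G T hT cG hcol u i] at ha hb ⊢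
      simp only [Set.mem_Icc] at ha hb ⊢
      omega
  · -- V empty
    refine ⟨0, fun _ => 0, ?_, ?_, ?_, ?_⟩
    · intro v a b _ _ _
      exact (hV ⟨v.1⟩).elim
    · intro e he
      induction e using Sym2.ind with
      | _ p q => exact (hV ⟨p.1⟩).elim
    · intro k h1 h0
      omega
    · intro v a _ _ _ _ _ _
      exact (hV ⟨v.1⟩).elim
end

section
/- For every integer n ≥ 2 and every interval coloring α of the complete tripartite graph K_{1,1,2n}, the sorted sequence of largest incident colors (max S(v,α) for v ∈ V(K_{1,1,2n})) is not continuous, i.e., it misses some integer between its minimum and maximum. -/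
open SimpleGraph

/-- The part of a vertex of K_{1,1,2n}. -/
def part3 (n : ℕ) : Fin 1 ⊕ Fin 1 ⊕ Fin (2 * n) → Fin 3 :=
  Sum.elim (fun _ => 0) (Sum.elim (fun _ => 1) (fun _ => 2))

/-- The complete tripartite graph K_{1,1,2n}. -/
def tripartite (n : ℕ) : SimpleGraph (Fin 1 ⊕ Fin 1 ⊕ Fin (2 * n)) where
  Adj a b := part3 n a ≠ part3 n b
  symm := ⟨fun _ _ h => h.symm⟩
  loopless := ⟨fun _ h => h rfl⟩


open Finset

lemma card_filter_comp {N : ℕ} (f : Fin N → ℕ) (hf : Function.Injective f)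
    (p : ℕ → Prop) [DecidablePred p] :
    (univ.filter (fun i => p (f i))).card = ((univ.image f).filter p).card := by
  rw [Finset.filter_image, Finset.card_image_of_injective _ hf]

lemma rank_even {N : ℕ} (f g : Fin N → ℕ) (hf : Function.Injective f)
    (hg : Function.Injective g)
    (himg : Finset.image f Finset.univ = Finset.image g Finset.univ)
    (hne : ∀ i, g i = f i + 1 ∨ f i = g i + 1)
    (x : ℕ) (i0 : Fin N) (hx : max (f i0) (g i0) = x) :
    Even ((univ.filter (fun i => f i ≤ x)).card) := by
  classical
  have hr : ∀ m, (univ.filter (fun i => f i ≤ m)).card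
      = (univ.filter (fun i => g i ≤ m)).card := by
    intro m
    rw [card_filter_comp f hf (· ≤ m), card_filter_comp g hg (· ≤ m), himg]
  have key : ∀ m, (univ.filter (fun i => max (f i) (g i) ≤ m)).card
      + (univ.filter (fun i => max (f i) (g i) ≤ m+1)).card
      = (univ.filter (fun i => f i ≤ m)).card + (univ.filter (fun i => g i ≤ m)).card := by
    intro m
    rw [Finset.card_filter, Finset.card_filter, Finset.card_filter, Finset.card_filter,
      ← Finset.sum_add_distrib, ← Finset.sum_add_distrib]
    refine Finset.sum_congr rfl (fun i _ => ?_)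
    rcases hne i with h | h
    · rw [max_eq_right (by omega : f i ≤ g i), h]
      split_ifs <;> omega
    · rw [max_eq_left (by omega : g i ≤ f i), h]
      split_ifs <;> omega
  have heven : ∀ m, Even ((univ.filter (fun i => max (f i) (g i) ≤ m)).card) := by
    intro m
    induction m with
    | zero =>
      have : (univ.filter (fun i => max (f i) (g i) ≤ 0)) = ∅ := by
        rw [Finset.filter_eq_empty_iff]
        intro i _
        rw [max_le_iff]
        rcases hne i with h | h <;> omega
      rw [this]; simp
    | succ m ih =>
      have k1 := key m
      have h2 := hr m
      rw [Nat.even_iff] at ih ⊢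
      omega
  obtain ⟨y, rfl⟩ : ∃ y, x = y + 1 := by
    rcases hne i0 with h | h
    · exact ⟨f i0, by rw [← hx, max_eq_right (by omega : f i0 ≤ g i0), h]⟩
    · exact ⟨g i0, by rw [← hx, max_eq_left (by omega : g i0 ≤ f i0), h]⟩
  have hxA : y + 1 ∈ Finset.image f univ := by
    rcases le_total (f i0) (g i0) with h | h
    · rw [himg]
      rw [max_eq_right h] at hx
      exact Finset.mem_image.mpr ⟨i0, Finset.mem_univ _, hx⟩
    · rw [max_eq_left h] at hx
      exact Finset.mem_image.mpr ⟨i0, Finset.mem_univ _, hx⟩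
  obtain ⟨j, -, hj⟩ := Finset.mem_image.mp hxA
  have h6 : (univ.filter (fun i => f i ≤ y+1)).card
      = (univ.filter (fun i => f i ≤ y)).card + 1 := by
    have hset : univ.filter (fun i => f i ≤ y+1) = insert j (univ.filter (fun i => f i ≤ y)) := by
      ext i
      simp only [Finset.mem_filter, Finset.mem_insert, Finset.mem_univ, true_and]
      constructor
      · intro hi
        by_cases hfi : f i = y + 1
        · exact Or.inl (hf (hfi.trans hj.symm))
        · exact Or.inr (by omega)
      · rintro (rfl | hi)
        · omega
        · omega
    rw [hset, Finset.card_insert_of_notMem (by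
      simp only [Finset.mem_filter, Finset.mem_univ, true_and, hj]; omega)]
  have h3 : (univ.filter (fun i => max (f i) (g i) ≤ y+1)).card
      ≤ (univ.filter (fun i => f i ≤ y+1)).card := by
    apply Finset.card_le_card
    intro i hi
    simp only [Finset.mem_filter, Finset.mem_univ, true_and, max_le_iff] at *
    omega
  have h4 : (univ.filter (fun i => f i ≤ y)).card
      ≤ (univ.filter (fun i => max (f i) (g i) ≤ y)).card + 1 := by
    have hsub : univ.filter (fun i => f i ≤ y)
        ⊆ (univ.filter (fun i => max (f i) (g i) ≤ y)) ∪ (univ.filter (fun i => f i = y)) := by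
      intro i hi
      simp only [Finset.mem_filter, Finset.mem_univ, true_and, Finset.mem_union, max_le_iff] at *
      rcases hne i with h | h <;> omega
    calc (univ.filter (fun i => f i ≤ y)).card
        ≤ ((univ.filter (fun i => max (f i) (g i) ≤ y)) ∪ (univ.filter (fun i => f i = y))).card :=
          Finset.card_le_card hsub
      _ ≤ (univ.filter (fun i => max (f i) (g i) ≤ y)).card
          + (univ.filter (fun i => f i = y)).card := Finset.card_union_le _ _
      _ ≤ (univ.filter (fun i => max (f i) (g i) ≤ y)).card + 1 := by
          gcongr
          apply Finset.card_le_one.mpr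
          intro p hp q hq
          simp only [Finset.mem_filter] at hp hq
          exact hf (hp.2.trans hq.2.symm)
  have h5 : (univ.filter (fun i => max (f i) (g i) ≤ y)).card + 1
      ≤ (univ.filter (fun i => max (f i) (g i) ≤ y+1)).card := by
    have hsub : insert i0 (univ.filter (fun i => max (f i) (g i) ≤ y))
        ⊆ univ.filter (fun i => max (f i) (g i) ≤ y+1) := by
      intro i hi
      rcases Finset.mem_insert.mp hi with rfl | hi
      · simp only [Finset.mem_filter, Finset.mem_univ, true_and, hx]
        omega
      · simp only [Finset.mem_filter, Finset.mem_univ, true_and] at *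
        omega
    have := Finset.card_le_card hsub
    rwa [Finset.card_insert_of_notMem (by
      simp only [Finset.mem_filter, Finset.mem_univ, true_and, hx]; omega)] at this
  have e1 := heven y
  have e2 := heven (y+1)
  have k1 := key y
  have hr1 := hr y
  rw [Nat.even_iff] at e1 e2 ⊢
  omega

set_option maxHeartbeats 2000000 in
/-- For n ≥ 2, no interval coloring of K_{1,1,2n} has a continuous sorted
sequence of largest incident colors. -/
theorem stmt15 (n : ℕ) (hn : 2 ≤ n) :
    ∀ t c, IsIntCol (tripartite n) c t → ¬ MaxSpecContinuous (tripartite n) c := by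
  intro t c hcol hcont
  obtain ⟨hprop, hbd, hsurj, hint⟩ := hcol
  classical
  set G := tripartite n with hG
  set u : Fin 1 ⊕ Fin 1 ⊕ Fin (2*n) := Sum.inl 0 with hu
  set w : Fin 1 ⊕ Fin 1 ⊕ Fin (2*n) := Sum.inr (Sum.inl 0) with hw
  set z : Fin (2*n) → Fin 1 ⊕ Fin 1 ⊕ Fin (2*n) := fun i => Sum.inr (Sum.inr i) with hz
  -- basic adjacency facts
  have adj_uw : G.Adj u w := by
    show part3 n u ≠ part3 n w
    simp [part3, hu, hw]
  have adj_wu : G.Adj w u := adj_uw.symm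
  have adj_uz : ∀ i, G.Adj u (z i) := by
    intro i; show part3 n u ≠ part3 n (z i); simp [part3, hu, hz]
  have adj_wz : ∀ i, G.Adj w (z i) := by
    intro i; show part3 n w ≠ part3 n (z i); simp [part3, hw, hz]
  have adj_zu : ∀ i, G.Adj (z i) u := fun i => (adj_uz i).symm
  have adj_zw : ∀ i, G.Adj (z i) w := fun i => (adj_wz i).symm
  have nbr_u : ∀ v, G.Adj u v → v = w ∨ ∃ i, v = z i := by
    rintro (x | x | i) h
    · exact absurd rfl h
    · exact Or.inl (by rw [hw, Subsingleton.elim x 0])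
    · exact Or.inr ⟨i, rfl⟩
  have nbr_w : ∀ v, G.Adj w v → v = u ∨ ∃ i, v = z i := by
    rintro (x | x | i) h
    · exact Or.inl (by rw [hu, Subsingleton.elim x 0])
    · exact absurd rfl h
    · exact Or.inr ⟨i, rfl⟩
  have nbr_z : ∀ i v, G.Adj (z i) v → v = u ∨ v = w := by
    rintro i (x | x | j) h
    · exact Or.inl (by rw [hu, Subsingleton.elim x 0])
    · exact Or.inr (by rw [hw, Subsingleton.elim x 0])
    · exact absurd rfl h
  set f : Fin (2*n) → ℕ := fun i => c s(u, z i) with hfdef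
  set g : Fin (2*n) → ℕ := fun i => c s(w, z i) with hgdef
  set c0 : ℕ := c s(u, w) with hc0def
  have hzinj : Function.Injective z := by
    intro i j h
    rw [hz] at h
    simpa using h
  have hfinj : Function.Injective f := by
    intro i j hij
    by_contra hij'
    exact hprop u (z i) (z j) (adj_uz i) (adj_uz j)
      (fun hzz => hij' (hzinj hzz)) hij
  have hginj : Function.Injective g := by
    intro i j hij
    by_contra hij'
    exact hprop w (z i) (z j) (adj_wz i) (adj_wz j)
      (fun hzz => hij' (hzinj hzz)) hij
  have hzw : ∀ i, z i ≠ w := by intro i h; rw [hz, hw] at h; simpa using h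
  have hzu : ∀ i, z i ≠ u := by intro i h; rw [hz, hu] at h; simpa using h
  have huw : u ≠ w := by rw [hu, hw]; simp
  have hfc0 : ∀ i, f i ≠ c0 := fun i =>
    hprop u (z i) w (adj_uz i) adj_uw (hzw i)
  have hgc0 : ∀ i, g i ≠ c0 := by
    intro i
    have := hprop w (z i) u (adj_wz i) adj_wu (hzu i)
    rwa [show s(w, u) = s(u, w) from Sym2.eq_swap] at this
  have hfgne : ∀ i, f i ≠ g i := by
    intro i
    have := hprop (z i) u w (adj_zu i) (adj_zw i) huw
    rwa [show s(z i, u) = s(u, z i) from Sym2.eq_swap,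
      show s(z i, w) = s(w, z i) from Sym2.eq_swap] at this
  -- spectra
  have spec_z : ∀ i, specS G c (z i) = {f i, g i} := by
    intro i
    ext k
    simp only [specS, Set.mem_setOf_eq, Set.mem_insert_iff, Set.mem_singleton_iff]
    constructor
    · rintro ⟨v, hadj, hc⟩
      rcases nbr_z i v hadj with rfl | rfl
      · left; rw [← hc, show s(z i, u) = s(u, z i) from Sym2.eq_swap]
      · right; rw [← hc, show s(z i, w) = s(w, z i) from Sym2.eq_swap]
    · rintro (rfl | rfl)
      · exact ⟨u, adj_zu i, by rw [show s(z i, u) = s(u, z i) from Sym2.eq_swap]⟩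
      · exact ⟨w, adj_zw i, by rw [show s(z i, w) = s(w, z i) from Sym2.eq_swap]⟩
  have hne : ∀ i, g i = f i + 1 ∨ f i = g i + 1 := by
    intro i
    by_contra hcon
    push_neg at hcon
    have hfi : f i ∈ specS G c (z i) := by rw [spec_z i]; exact Set.mem_insert _ _
    have hgi : g i ∈ specS G c (z i) := by
      rw [spec_z i]; exact Set.mem_insert_of_mem _ rfl
    rcases Nat.lt_or_ge (f i) (g i) with hlt | hge
    · have hk := hint (z i) (f i) hfi (g i) hgi (f i + 1) (by omega) (by omega)
      rw [spec_z i] at hk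
      rcases hk with h | h
      · omega
      · rw [Set.mem_singleton_iff] at h; omega
    · have hlt : g i < f i := lt_of_le_of_ne hge (fun h => hfgne i h.symm)
      have hk := hint (z i) (g i) hgi (f i) hfi (g i + 1) (by omega) (by omega)
      rw [spec_z i] at hk
      rcases hk with h | h
      · omega
      · rw [Set.mem_singleton_iff] at h; omega
  set F : Finset ℕ := Finset.image f Finset.univ with hFdef
  set Gg : Finset ℕ := Finset.image g Finset.univ with hGgdef
  set Au : Finset ℕ := insert c0 F with hAudef
  set Aw : Finset ℕ := insert c0 Gg with hAwdef
  have spec_u : specS G c u = ↑Au := by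
    ext k
    simp only [specS, Set.mem_setOf_eq, hAudef, Finset.coe_insert, Set.mem_insert_iff,
      Finset.mem_coe, hFdef, Finset.mem_image, Finset.mem_univ, true_and]
    constructor
    · rintro ⟨v, hadj, hc⟩
      rcases nbr_u v hadj with rfl | ⟨i, rfl⟩
      · exact Or.inl hc.symm
      · exact Or.inr ⟨i, hc⟩
    · rintro (rfl | ⟨i, rfl⟩)
      · exact ⟨w, adj_uw, rfl⟩
      · exact ⟨z i, adj_uz i, rfl⟩
  have spec_w : specS G c w = ↑Aw := by
    ext k
    simp only [specS, Set.mem_setOf_eq, hAwdef, Finset.coe_insert, Set.mem_insert_iff,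
      Finset.mem_coe, hGgdef, Finset.mem_image, Finset.mem_univ, true_and]
    constructor
    · rintro ⟨v, hadj, hc⟩
      rcases nbr_w v hadj with rfl | ⟨i, rfl⟩
      · refine Or.inl ?_
        rw [← hc, show s(w, u) = s(u, w) from Sym2.eq_swap]
      · exact Or.inr ⟨i, hc⟩
    · rintro (rfl | ⟨i, rfl⟩)
      · exact ⟨u, adj_wu, by rw [show s(w, u) = s(u, w) from Sym2.eq_swap]⟩
      · exact ⟨z i, adj_wz i, rfl⟩
  have hc0F : c0 ∉ F := by
    rw [hFdef]
    simp only [Finset.mem_image, Finset.mem_univ, true_and, not_exists]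
    exact fun i => hfc0 i
  have hc0Gg : c0 ∉ Gg := by
    rw [hGgdef]
    simp only [Finset.mem_image, Finset.mem_univ, true_and, not_exists]
    exact fun i => hgc0 i
  have hAu_card : Au.card = 2*n + 1 := by
    rw [hAudef, Finset.card_insert_of_notMem hc0F, hFdef,
      Finset.card_image_of_injective _ hfinj, Finset.card_univ, Fintype.card_fin]
  have hAw_card : Aw.card = 2*n + 1 := by
    rw [hAwdef, Finset.card_insert_of_notMem hc0Gg, hGgdef,
      Finset.card_image_of_injective _ hginj, Finset.card_univ, Fintype.card_fin]
  have hAu_ne : Au.Nonempty := ⟨c0, Finset.mem_insert_self _ _⟩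
  have hAw_ne : Aw.Nonempty := ⟨c0, Finset.mem_insert_self _ _⟩
  -- interval structure of the spectra of u and w
  have hIcc : ∀ (S : Finset ℕ) (hS : S.Nonempty) (v : Fin 1 ⊕ Fin 1 ⊕ Fin (2*n)),
      specS G c v = ↑S → S.card = 2*n+1 → S = Finset.Icc (S.min' hS) (S.min' hS + 2*n) := by
    intro S hS v hspec hcard
    have hIcc1 : S = Finset.Icc (S.min' hS) (S.max' hS) := by
      ext k
      simp only [Finset.mem_Icc]
      constructor
      · intro hk
        exact ⟨Finset.min'_le _ _ hk, Finset.le_max' _ _ hk⟩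
      · rintro ⟨h1, h2⟩
        have hmem : k ∈ specS G c v := hint v (S.min' hS)
          (by rw [hspec]; exact Finset.mem_coe.mpr (S.min'_mem hS))
          (S.max' hS)
          (by rw [hspec]; exact Finset.mem_coe.mpr (S.max'_mem hS)) k h1 h2
        rw [hspec] at hmem
        exact Finset.mem_coe.mp hmem
    have hminmax : S.min' hS ≤ S.max' hS := Finset.min'_le _ _ (S.max'_mem hS)
    have hcard2 : (Finset.Icc (S.min' hS) (S.max' hS)).card = 2*n+1 := by
      rw [← hIcc1]; exact hcard
    rw [Nat.card_Icc] at hcard2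
    have hmx : S.max' hS = S.min' hS + 2*n := by omega
    rw [← hmx]
    exact hIcc1
  have hAuI := hIcc Au hAu_ne u spec_u hAu_card
  have hAwI := hIcc Aw hAw_ne w spec_w hAw_card
  set a : ℕ := Au.min' hAu_ne with hadef
  set b : ℕ := Aw.min' hAw_ne with hbdef
  -- sum argument: b = a
  have hsum_u : c0 + ∑ i, f i = ∑ x ∈ Finset.Icc a (a+2*n), x := by
    rw [← hAuI, hAudef, Finset.sum_insert hc0F, hFdef,
      Finset.sum_image (fun i _ j _ h => hfinj h)]
  have hsum_w : c0 + ∑ i, g i = ∑ x ∈ Finset.Icc b (b+2*n), x := by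
    rw [← hAwI, hAwdef, Finset.sum_insert hc0Gg, hGgdef,
      Finset.sum_image (fun i _ j _ h => hginj h)]
  have gauss : ∀ m : ℕ, (∑ x ∈ Finset.Icc m (m + 2*n), x) * 2 = (m + (m + 2*n)) * (2*n + 1) := by
    intro m
    have h1 : Finset.Icc m (m + 2*n)
        = (Finset.range (2*n+1)).map ⟨fun j => m + j, add_right_injective m⟩ := by
      ext x
      simp only [Finset.mem_map, Finset.mem_Icc, Finset.mem_range, Function.Embedding.coeFn_mk]
      constructor
      · intro hx
        exact ⟨x - m, by omega, by omega⟩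
      · rintro ⟨j, hj, rfl⟩
        omega
    rw [h1, Finset.sum_map]
    simp only [Function.Embedding.coeFn_mk]
    rw [Finset.sum_add_distrib, Finset.sum_const, Finset.card_range, add_mul,
      Finset.sum_range_id_mul_two, smul_eq_mul]
    have : 2*n + 1 - 1 = 2*n := by omega
    rw [this]
    ring
  have hba : b = a := by
    have e1 : ((c0 : ℤ)) + ∑ i, (f i : ℤ) = ∑ x ∈ Finset.Icc a (a+2*n), (x : ℤ) := by
      have hc := congrArg (fun k : ℕ => (k : ℤ)) hsum_u
      push_cast at hc
      exact hc
    have e2 : ((c0 : ℤ)) + ∑ i, (g i : ℤ) = ∑ x ∈ Finset.Icc b (b+2*n), (x : ℤ) := by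
      have hc := congrArg (fun k : ℕ => (k : ℤ)) hsum_w
      push_cast at hc
      exact hc
    have g1 : (∑ x ∈ Finset.Icc a (a+2*n), (x:ℤ)) * 2 = ((a:ℤ) + ((a:ℤ) + 2*n)) * (2*n + 1) := by
      have hc := congrArg (fun k : ℕ => (k : ℤ)) (gauss a)
      push_cast at hc
      exact hc
    have g2 : (∑ x ∈ Finset.Icc b (b+2*n), (x:ℤ)) * 2 = ((b:ℤ) + ((b:ℤ) + 2*n)) * (2*n + 1) := by
      have hc := congrArg (fun k : ℕ => (k : ℤ)) (gauss b)
      push_cast at hc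
      exact hc
    set Sval : ℤ := ∑ i, ((g i : ℤ) - (f i : ℤ)) with hSdef
    have hsub : Sval = (∑ x ∈ Finset.Icc b (b+2*n), (x:ℤ)) - ∑ x ∈ Finset.Icc a (a+2*n), (x:ℤ) := by
      rw [hSdef, Finset.sum_sub_distrib]
      linarith [e1, e2]
    have h2 : 2 * ((2*(n:ℤ)+1) * ((b:ℤ) - (a:ℤ))) = 2 * Sval := by
      rw [hsub]
      linear_combination g1 - g2
    have hd : (2*(n:ℤ)+1) * ((b:ℤ) - (a:ℤ)) = Sval := by linarith
    have habs : |Sval| ≤ 2*(n:ℤ) := by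
      calc |Sval| ≤ ∑ i, |(g i : ℤ) - (f i : ℤ)| := Finset.abs_sum_le_sum_abs _ _
        _ = ∑ _i : Fin (2*n), (1:ℤ) := by
            refine Finset.sum_congr rfl (fun i _ => ?_)
            rcases hne i with h | h
            · have hh : (g i : ℤ) = (f i : ℤ) + 1 := by exact_mod_cast h
              rw [hh]
              simp
            · have hh : (f i : ℤ) = (g i : ℤ) + 1 := by exact_mod_cast h
              rw [hh, abs_sub_comm]
              simp
        _ = 2*(n:ℤ) := by simp
    have habs' := abs_le.mp habs
    have hfin : (b:ℤ) = (a:ℤ) := by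
      rcases lt_trichotomy ((b:ℤ) - (a:ℤ)) 0 with h | h | h
      · exfalso
        have h1 : (b:ℤ) - (a:ℤ) ≤ -1 := by omega
        have h2' : (2*(n:ℤ)+1) * ((b:ℤ)-(a:ℤ)) ≤ (2*(n:ℤ)+1) * (-1) :=
          mul_le_mul_of_nonneg_left h1 (by positivity)
        rw [hd] at h2'
        have hn' : (2:ℤ) ≤ (n:ℤ) := by exact_mod_cast hn
        linarith
      · linarith
      · exfalso
        have h1 : (1:ℤ) ≤ (b:ℤ) - (a:ℤ) := by omega
        have h2' : (2*(n:ℤ)+1) * 1 ≤ (2*(n:ℤ)+1) * ((b:ℤ)-(a:ℤ)) :=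
          mul_le_mul_of_nonneg_left h1 (by positivity)
        rw [hd] at h2'
        have hn' : (2:ℤ) ≤ (n:ℤ) := by exact_mod_cast hn
        linarith
    exact_mod_cast hfin
  -- the common ground set
  set A : Finset ℕ := (Finset.Icc a (a+2*n)).erase c0 with hAdef
  have hFA : F = A := by
    have h1 : Au.erase c0 = F := by rw [hAudef]; exact Finset.erase_insert hc0F
    rw [← h1, hAuI, hAdef]
  have hGA : Gg = A := by
    have h1 : Aw.erase c0 = Gg := by rw [hAwdef]; exact Finset.erase_insert hc0Gg
    rw [← h1, hAwI, hba, hAdef]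
  have himg : Finset.image f Finset.univ = Finset.image g Finset.univ := by
    rw [← hFdef, ← hGgdef, hFA, hGA]
  have hc0mem : c0 ∈ Finset.Icc a (a+2*n) := by
    rw [← hAuI]; exact Finset.mem_insert_self _ _
  have hc0a : a ≤ c0 ∧ c0 ≤ a + 2*n := Finset.mem_Icc.mp hc0mem
  have hmemA : ∀ x, x ∈ A ↔ (x ≠ c0 ∧ a ≤ x ∧ x ≤ a + 2*n) := by
    intro x
    rw [hAdef, Finset.mem_erase, Finset.mem_Icc]
  have hfA : ∀ i, f i ∈ A := by
    intro i
    rw [← hFA, hFdef]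
    exact Finset.mem_image_of_mem f (Finset.mem_univ i)
  have hgA : ∀ i, g i ∈ A := by
    intro i
    rw [← hGA, hGgdef]
    exact Finset.mem_image_of_mem g (Finset.mem_univ i)
  -- membership of a max value implies membership in A
  have hH : ∀ k0, (∃ i, max (f i) (g i) = k0) → k0 ∈ A := by
    rintro k0 ⟨i, hi⟩
    rcases le_total (f i) (g i) with h | h
    · rw [max_eq_right h] at hi; rw [← hi]; exact hgA i
    · rw [max_eq_left h] at hi; rw [← hi]; exact hfA i
  -- suprema of spectra
  have sSup_u : sSup (specS G c u) = a + 2*n := by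
    rw [spec_u]
    apply IsGreatest.csSup_eq
    constructor
    · rw [hAuI]
      exact Finset.mem_coe.mpr (Finset.mem_Icc.mpr ⟨by omega, le_refl _⟩)
    · intro k hk
      rw [hAuI] at hk
      exact (Finset.mem_Icc.mp (Finset.mem_coe.mp hk)).2
  have sSup_w : sSup (specS G c w) = a + 2*n := by
    rw [spec_w]
    apply IsGreatest.csSup_eq
    constructor
    · rw [hAwI, hba]
      exact Finset.mem_coe.mpr (Finset.mem_Icc.mpr ⟨by omega, le_refl _⟩)
    · intro k hk
      rw [hAwI, hba] at hk
      exact (Finset.mem_Icc.mp (Finset.mem_coe.mp hk)).2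
  have sSup_z : ∀ i, sSup (specS G c (z i)) = max (f i) (g i) := by
    intro i
    rw [spec_z i]
    apply IsGreatest.csSup_eq
    constructor
    · rcases le_total (f i) (g i) with h | h
      · rw [max_eq_right h]; exact Set.mem_insert_of_mem _ rfl
      · rw [max_eq_left h]; exact Set.mem_insert _ _
    · rintro k hk
      rcases hk with rfl | hk
      · exact le_max_left _ _
      · rw [Set.mem_singleton_iff] at hk
        rw [hk]
        exact le_max_right _ _
  have hM : ∀ m, m ∈ maxSpecSet G c ↔ (m = a + 2*n ∨ ∃ i, max (f i) (g i) = m) := by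
    intro m
    constructor
    · rintro ⟨v, hv⟩
      rcases v with x | x | i
      · left
        rw [show (Sum.inl x : Fin 1 ⊕ Fin 1 ⊕ Fin (2*n)) = u by
          rw [hu]; congr 1; exact Subsingleton.elim x 0, sSup_u] at hv
        exact hv.symm
      · left
        rw [show (Sum.inr (Sum.inl x) : Fin 1 ⊕ Fin 1 ⊕ Fin (2*n)) = w by
          rw [hw]; congr 2; exact Subsingleton.elim x 0, sSup_w] at hv
        exact hv.symm
      · right
        exact ⟨i, by rw [← sSup_z i]; exact hv⟩
    · rintro (rfl | ⟨i, hi⟩)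
      · exact ⟨u, sSup_u⟩
      · exact ⟨z i, by rw [sSup_z i, hi]⟩
  have hSup : sSup (maxSpecSet G c) = a + 2*n := by
    apply IsGreatest.csSup_eq
    constructor
    · exact (hM _).mpr (Or.inl rfl)
    · intro m hm
      rcases (hM m).mp hm with rfl | ⟨i, hi⟩
      · exact le_refl _
      · have := hH m ⟨i, hi⟩
        exact ((hmemA m).mp this).2.2
  -- partner of the minimum of A
  have partner : ∀ v, v ∈ A → (∀ x, x ∈ A → v ≤ x) →
      (∃ i, max (f i) (g i) = v + 1) ∧ v + 1 ∈ A := by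
    intro v hvA hmin
    have hvF : v ∈ F := by rw [hFA]; exact hvA
    rw [hFdef] at hvF
    obtain ⟨i, -, hi⟩ := Finset.mem_image.mp hvF
    have hgiA : g i ∈ A := hgA i
    have hgiv : g i = v + 1 := by
      rcases hne i with h | h
      · rw [hi] at h; exact h
      · exfalso
        have := hmin (g i) hgiA
        omega
    constructor
    · exact ⟨i, by rw [hi, hgiv]; exact max_eq_right (by omega)⟩
    · rw [← hgiv]; exact hgiA
  -- helper: a max value has even rank in A
  have hrank : ∀ k0, (∃ i, max (f i) (g i) = k0) →
      Even ((A.filter (· ≤ k0)).card) := by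
    rintro k0 ⟨i, hi⟩
    have he := rank_even f g hfinj hginj himg hne k0 i hi
    rwa [card_filter_comp f hfinj (· ≤ k0), ← hFdef, hFA] at he
  by_cases hca : c0 = a
  · -- c0 = a : minimum of A is a+1, its partner gives a+2 ∈ H; a+3 is missing
    have hminA1 : a + 1 ∈ A := by rw [hmemA]; omega
    have hminA2 : ∀ x, x ∈ A → a + 1 ≤ x := by
      intro x hx
      rw [hmemA] at hx
      omega
    obtain ⟨⟨i, hi⟩, -⟩ := partner (a+1) hminA1 hminA2
    have hmem1 : a + 2 ∈ maxSpecSet G c := (hM _).mpr (Or.inr ⟨i, hi⟩)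
    have h1 : sInf (maxSpecSet G c) ≤ a + 3 :=
      le_trans (csInf_le (OrderBot.bddBelow _) hmem1) (by omega)
    have h2 : a + 3 ≤ sSup (maxSpecSet G c) := by rw [hSup]; omega
    have hk := (hM _).mp (hcont (a+3) h1 h2)
    rcases hk with h | h
    · omega
    · have he := hrank (a+3) h
      have hfil : A.filter (· ≤ a+3) = Finset.Icc (a+1) (a+3) := by
        ext x
        simp only [Finset.mem_filter, hAdef, Finset.mem_erase, Finset.mem_Icc]
        constructor
        · rintro ⟨⟨hx1, hx2, hx3⟩, hx4⟩
          omega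
        · intro hx
          exact ⟨⟨by omega, by omega, by omega⟩, by omega⟩
      rw [hfil, Nat.card_Icc] at he
      rw [Nat.even_iff] at he
      omega
  · by_cases hcb : c0 = a + 2*n
    · -- c0 = a + 2n : minimum of A is a, partner gives a+1 ∈ H; a+2 is missing
      have hminA1 : a ∈ A := by rw [hmemA]; omega
      have hminA2 : ∀ x, x ∈ A → a ≤ x := by
        intro x hx
        rw [hmemA] at hx
        omega
      obtain ⟨⟨i, hi⟩, -⟩ := partner a hminA1 hminA2
      have hmem1 : a + 1 ∈ maxSpecSet G c := (hM _).mpr (Or.inr ⟨i, hi⟩)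
      have h1 : sInf (maxSpecSet G c) ≤ a + 2 :=
        le_trans (csInf_le (OrderBot.bddBelow _) hmem1) (by omega)
      have h2 : a + 2 ≤ sSup (maxSpecSet G c) := by rw [hSup]; omega
      have hk := (hM _).mp (hcont (a+2) h1 h2)
      rcases hk with h | h
      · omega
      · have he := hrank (a+2) h
        have hfil : A.filter (· ≤ a+2) = Finset.Icc a (a+2) := by
          ext x
          simp only [Finset.mem_filter, hAdef, Finset.mem_erase, Finset.mem_Icc]
          constructor
          · rintro ⟨⟨hx1, hx2, hx3⟩, hx4⟩
            omega
          · intro hx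
            exact ⟨⟨by omega, by omega, by omega⟩, by omega⟩
        rw [hfil, Nat.card_Icc] at he
        rw [Nat.even_iff] at he
        omega
    · -- a < c0 < a + 2n : the value c0 itself is missing
      have hminA1 : a ∈ A := by
        rw [hmemA]
        exact ⟨fun h => hca h.symm, by omega, by omega⟩
      have hminA2 : ∀ x, x ∈ A → a ≤ x := by
        intro x hx
        rw [hmemA] at hx
        omega
      obtain ⟨⟨i, hi⟩, -⟩ := partner a hminA1 hminA2
      have hmem1 : a + 1 ∈ maxSpecSet G c := (hM _).mpr (Or.inr ⟨i, hi⟩)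
      have hac0 : a < c0 := lt_of_le_of_ne hc0a.1 (fun h => hca h.symm)
      have h1 : sInf (maxSpecSet G c) ≤ c0 :=
        le_trans (csInf_le (OrderBot.bddBelow _) hmem1) (by omega)
      have h2 : c0 ≤ sSup (maxSpecSet G c) := by rw [hSup]; omega
      have hk := (hM _).mp (hcont c0 h1 h2)
      rcases hk with h | h
      · exact hcb h
      · have hcA := hH c0 h
        rw [hmemA] at hcA
        exact hcA.1 rfl
end

section
/- In any interval t-coloring of the lexicographic product G[H] constructed from an interval coloring α_G of G and colorings α_H of H and β of K_2[H] as in the main construction, every vertex (u_i, w_j) satisfies max S((u_i,w_j)) - min S((u_i,w_j)) = deg_{G[H]}((u_i,w_j)) - 1 = deg_G(u_i)·|V(H)| + deg_H(w_j) - 1. -/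
open SimpleGraph

instance {V W : Type*} [DecidableEq V] (G : SimpleGraph V) (H : SimpleGraph W)
    [DecidableRel G.Adj] [DecidableRel H.Adj] : DecidableRel (lexComp G H).Adj :=
  fun a b => inferInstanceAs (Decidable (G.Adj a.1 b.1 ∨ (a.1 = b.1 ∧ H.Adj a.2 b.2)))

/-- In any interval t-coloring of G[H], every vertex (u,w) satisfies
max S − min S = deg_{G[H]}(u,w) − 1 = deg_G(u)·|V(H)| + deg_H(w) − 1. -/
theorem stmt16 {V W : Type*} [Fintype V] [Fintype W] [DecidableEq V]
    (G : SimpleGraph V) (H : SimpleGraph W)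
    [DecidableRel G.Adj] [DecidableRel H.Adj]
    (t : ℕ) (c : Sym2 (V × W) → ℕ) (hc : IsIntCol (lexComp G H) c t) :
    ∀ (u : V) (w : W),
      sSup (specS (lexComp G H) c (u, w)) - sInf (specS (lexComp G H) c (u, w)) =
        (lexComp G H).degree (u, w) - 1 ∧
      (lexComp G H).degree (u, w) = G.degree u * Fintype.card W + H.degree w := by
  classical
  intro u w
  set L := lexComp G H with hL
  -- degree formula
  have hadj : ∀ a b, L.Adj (u, w) (a, b) ↔ (G.Adj u a ∨ (u = a ∧ H.Adj w b)) := by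
    intro a b; rfl
  have hdeg : L.degree (u, w) = G.degree u * Fintype.card W + H.degree w := by
    have hset : L.neighborFinset (u, w) =
        (G.neighborFinset u) ×ˢ (Finset.univ : Finset W) ∪
          ({u} : Finset V) ×ˢ H.neighborFinset w := by
      ext ⟨a, b⟩
      simp only [SimpleGraph.mem_neighborFinset, hadj, Finset.mem_union,
        Finset.mem_product, Finset.mem_univ, Finset.mem_singleton, and_true]
      constructor
      · rintro (h | ⟨h1, h2⟩)
        · exact Or.inl h
        · exact Or.inr ⟨h1.symm, h2⟩
      · rintro (h | ⟨h1, h2⟩)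
        · exact Or.inl h
        · exact Or.inr ⟨h1.symm, h2⟩
    have hdisj : Disjoint ((G.neighborFinset u) ×ˢ (Finset.univ : Finset W))
        (({u} : Finset V) ×ˢ H.neighborFinset w) := by
      rw [Finset.disjoint_left]
      rintro ⟨a, b⟩ h1 h2
      rw [Finset.mem_product] at h1 h2
      rw [Finset.mem_singleton] at h2
      rw [SimpleGraph.mem_neighborFinset] at h1
      exact G.irrefl (h2.1 ▸ h1.1)
    rw [SimpleGraph.degree, hset, Finset.card_union_of_disjoint hdisj,
      Finset.card_product, Finset.card_product, Finset.card_singleton,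
      Finset.card_univ, one_mul]
    rfl
  refine ⟨?_, hdeg⟩
  -- spectrum part
  set f : V × W → ℕ := fun x => c s((u, w), x) with hf
  set N := L.neighborFinset (u, w) with hN
  set s := N.image f with hs
  have hspec : specS L c (u, w) = ↑s := by
    ext k
    simp only [specS, Set.mem_setOf_eq, hs, Finset.coe_image, Set.mem_image,
      Finset.mem_coe, hN, SimpleGraph.mem_neighborFinset, hf]
  have hcard : s.card = N.card := by
    apply Finset.card_image_of_injOn
    intro a ha b hb hab
    by_contra hne
    exact hc.1 (u, w) a b (by simpa [hN] using ha) (by simpa [hN] using hb) hne hab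
  rcases s.eq_empty_or_nonempty with he | hne
  · have hN0 : N = ∅ := by
      rcases N.eq_empty_or_nonempty with h | ⟨x, hx⟩
      · exact h
      · exfalso; rw [he] at hcard
        simp [Finset.card_eq_zero.mp hcard.symm] at hx
    have : L.degree (u, w) = 0 := by rw [SimpleGraph.degree, ← hN, hN0]; rfl
    rw [hspec, he, this]
    simp
  · have hsup : sSup (specS L c (u, w)) = s.max' hne := by
      rw [hspec, hne.csSup_eq_max']
    have hinf : sInf (specS L c (u, w)) = s.min' hne := by
      rw [hspec, hne.csInf_eq_min']
    set M := s.max' hne with hM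
    set m := s.min' hne with hm
    have hmM : m ≤ M := s.min'_le M (s.max'_mem hne)
    have hIcc : s = Finset.Icc m M := by
      apply Finset.Subset.antisymm
      · intro x hx
        rw [Finset.mem_Icc]
        exact ⟨s.min'_le x hx, s.le_max' x hx⟩
      · intro k hk
        rw [Finset.mem_Icc] at hk
        have h1 : (m : ℕ) ∈ specS L c (u, w) := by
          rw [hspec]; exact_mod_cast s.min'_mem hne
        have h2 : (M : ℕ) ∈ specS L c (u, w) := by
          rw [hspec]; exact_mod_cast s.max'_mem hne
        have := hc.2.2.2 (u, w) m h1 M h2 k hk.1 hk.2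
        rw [hspec] at this; exact_mod_cast this
    have hdegN : L.degree (u, w) = N.card := rfl
    have : N.card = M + 1 - m := by
      rw [← hcard, hIcc, Nat.card_Icc]
    rw [hsup, hinf, hdegN, this]
    omega
end
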